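/- arXiv:1701.08394 — 7 statements merged into one kernel-verified Lean document; each statement's English description precedes it below -/
import Mathlib

section
/- For σ ≥ 1 and n < k ≤ (σ+1)n, E_σ(n,k) = (k!/(k-n)) · Σ_{i=1}^{min(σ, k-n)} ((n+1)i - k + n) / ((i+1)! (k-i)!) · E_σ(n, k-i). -/
/-- `E σ n k` is the number of set partitions of `{1,...,k}` into exactly `n`
nonempty blocks, each of size at most `σ + 1`. -/
noncomputable def E (σ n k : ℕ) : ℕ :=
  Nat.card {P : Finpartition (Finset.univ : Finset (Fin k)) //
    P.parts.card = n ∧ ∀ p ∈ P.parts, p.card ≤ σ + 1}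

/-- `G σ n = ∑_{k=n}^{(σ+1)n} E σ n k`. -/
noncomputable def G (σ n : ℕ) : ℕ := ∑ k ∈ Finset.Icc n ((σ + 1) * n), E σ n k

open Finset

variable {α β : Type*} [DecidableEq α] [DecidableEq β]

noncomputable def cnt (σ n : ℕ) (s : Finset α) : ℕ :=
  Nat.card {P : Finpartition s // P.parts.card = n ∧ ∀ p ∈ P.parts, p.card ≤ σ + 1}

/-- push a finpartition along an embedding -/
def pmap (f : α ↪ β) {s : Finset α} (P : Finpartition s) : Finpartition (s.map f) where
  parts := P.parts.map (Finset.mapEmbedding f).toEmbedding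
  supIndep := by
    rw [Finset.supIndep_iff_pairwiseDisjoint]
    rintro _ hp _ hq hne
    simp only [coe_map, Set.mem_image, mem_coe] at hp hq
    obtain ⟨p, hp, rfl⟩ := hp
    obtain ⟨q, hq, rfl⟩ := hq
    simp only [RelEmbedding.coe_toEmbedding, Finset.mapEmbedding_apply, Function.onFun, id_eq]
    rw [Finset.disjoint_map]
    exact P.disjoint hp hq (fun h => hne (by rw [h]))
  sup_parts := by
    ext b
    simp only [mem_sup, mem_map, RelEmbedding.coe_toEmbedding, Finset.mapEmbedding_apply]
    constructor
    · rintro ⟨_, ⟨p, hp, rfl⟩, hb⟩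
      rw [id_eq, Finset.mem_map] at hb
      obtain ⟨a, ha, rfl⟩ := hb
      exact ⟨a, by rw [← P.sup_parts]; exact mem_sup.2 ⟨p, hp, ha⟩, rfl⟩
    · rintro ⟨a, ha, rfl⟩
      rw [← P.sup_parts, mem_sup] at ha
      obtain ⟨p, hp, hap⟩ := ha
      exact ⟨p.map f, ⟨p, hp, rfl⟩, Finset.mem_map_of_mem f hap⟩
  bot_notMem := by
    simp only [bot_eq_empty, mem_map, RelEmbedding.coe_toEmbedding, Finset.mapEmbedding_apply]
    rintro ⟨p, hp, hpe⟩
    rw [Finset.map_eq_empty] at hpe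
    subst hpe
    exact P.bot_notMem hp

@[simp] lemma pmap_parts (f : α ↪ β) {s : Finset α} (P : Finpartition s) :
    (pmap f P).parts = P.parts.map (Finset.mapEmbedding f).toEmbedding := rfl

lemma cnt_map (σ n : ℕ) (f : α ↪ β) (s : Finset α) : cnt σ n (s.map f) = cnt σ n s := by
  apply Nat.card_congr
  apply Equiv.symm
  refine Equiv.ofBijective (fun P => ⟨pmap f P.1, ?_, ?_⟩) ⟨?_, ?_⟩
  · rw [pmap_parts, Finset.card_map]; exact P.2.1
  · rintro p hp
    rw [pmap_parts, Finset.mem_map] at hp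
    obtain ⟨q, hq, rfl⟩ := hp
    rw [RelEmbedding.coe_toEmbedding, Finset.mapEmbedding_apply, Finset.card_map]
    exact P.2.2 q hq
  · rintro ⟨P, hP⟩ ⟨Q, hQ⟩ h
    simp only [Subtype.mk_eq_mk] at h ⊢
    apply Finpartition.ext
    have := congrArg Finpartition.parts h
    simp only [pmap_parts] at this
    exact Finset.map_injective _ this
  · rintro ⟨Q, hQ1, hQ2⟩
    set g : Finset β → Finset α := fun q => s.filter (fun a => f a ∈ q) with hg
    have hgmap : ∀ q ∈ Q.parts, (g q).map f = q := by
      intro q hq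
      ext b
      simp only [hg, Finset.mem_map, mem_filter]
      constructor
      · rintro ⟨a, ⟨_, ha⟩, rfl⟩; exact ha
      · intro hb
        have hbs : b ∈ s.map f := by
          rw [← Q.sup_parts]; exact mem_sup.2 ⟨q, hq, hb⟩
        rw [Finset.mem_map] at hbs
        obtain ⟨a, ha, rfl⟩ := hbs
        exact ⟨a, ⟨ha, hb⟩, rfl⟩
    refine ⟨⟨⟨Q.parts.image g, ?_, ?_, ?_⟩, ?_, ?_⟩, ?_⟩
    · rw [Finset.supIndep_iff_pairwiseDisjoint]
      rintro _ hp _ hq hne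
      simp only [coe_image, Set.mem_image, mem_coe] at hp hq
      obtain ⟨p, hp, rfl⟩ := hp
      obtain ⟨q, hq, rfl⟩ := hq
      have hpq : p ≠ q := fun h => hne (by rw [h])
      have hd := Q.disjoint hp hq hpq
      simp only [Function.onFun, id_eq] at hd ⊢
      rw [Finset.disjoint_left]
      intro a ha hb
      simp only [hg, id_eq, mem_filter] at ha hb
      exact (Finset.disjoint_left.1 hd) ha.2 hb.2
    · ext a
      simp only [mem_sup, mem_image, id_eq]
      constructor
      · rintro ⟨_, ⟨q, hq, rfl⟩, ha⟩
        exact (mem_filter.1 ha).1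
      · intro ha
        have : f a ∈ s.map f := Finset.mem_map_of_mem f ha
        rw [← Q.sup_parts, mem_sup] at this
        obtain ⟨q, hq, hfa⟩ := this
        exact ⟨g q, ⟨q, hq, rfl⟩, mem_filter.2 ⟨ha, hfa⟩⟩
    · simp only [bot_eq_empty, mem_image]
      rintro ⟨q, hq, hqe⟩
      apply Q.bot_notMem
      have := hgmap q hq
      rw [hqe, Finset.map_empty] at this
      rw [← this] at hq; exact hq
    · rw [Finset.card_image_of_injOn, hQ1]
      intro p hp q hq h
      rw [← hgmap p hp, ← hgmap q hq, h]
    · rintro p hp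
      rw [Finset.mem_image] at hp
      obtain ⟨q, hq, rfl⟩ := hp
      have := hgmap q hq
      have hc : (g q).card = q.card := by
        conv_rhs => rw [← this]
        rw [Finset.card_map]
      rw [hc]; exact hQ2 q hq
    · apply Subtype.ext
      apply Finpartition.ext
      simp only [pmap_parts]
      ext r
      simp only [Finset.mem_map, Finset.mem_image, RelEmbedding.coe_toEmbedding,
        Finset.mapEmbedding_apply]
      constructor
      · rintro ⟨_, ⟨q, hq, rfl⟩, rfl⟩
        rw [hgmap q hq]; exact hq
      · intro hr
        exact ⟨g r, ⟨r, hr, rfl⟩, hgmap r hr⟩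

lemma cnt_eq_E {α : Type*} [DecidableEq α] [LinearOrder α] (σ n : ℕ) (s : Finset α) :
    cnt σ n s = E σ n s.card := by
  have h : ((univ : Finset (Fin s.card)).map (s.orderEmbOfFin rfl).toEmbedding) = s := by
    ext a
    simp only [Finset.mem_map, mem_univ, true_and]
    constructor
    · rintro ⟨i, rfl⟩; exact s.orderEmbOfFin_mem rfl i
    · intro ha
      have : a ∈ Set.range ⇑(s.orderEmbOfFin rfl) := by
        rw [Finset.range_orderEmbOfFin]; exact ha
      obtain ⟨i, hi⟩ := this
      exact ⟨i, hi⟩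
  have h2 := cnt_map σ n (s.orderEmbOfFin rfl).toEmbedding (univ : Finset (Fin s.card))
  rw [h] at h2
  rw [h2]
  rfl

lemma E_eq_zero {σ n k : ℕ} (h : k < n) : E σ n k = 0 := by
  have : IsEmpty {P : Finpartition (univ : Finset (Fin k)) //
      P.parts.card = n ∧ ∀ p ∈ P.parts, p.card ≤ σ + 1} := by
    constructor
    rintro ⟨P, h1, _⟩
    have h2 := P.card_parts_le_card
    rw [card_univ, Fintype.card_fin, h1] at h2
    omega
  exact Nat.card_of_isEmpty

def cntF (σ n : ℕ) (s : Finset α) : Finset (Finpartition s) :=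
  (univ : Finset (Finpartition s)).filter
    (fun P => P.parts.card = n ∧ ∀ p ∈ P.parts, p.card ≤ σ + 1)

lemma mem_cntF {σ n : ℕ} {s : Finset α} {P : Finpartition s} :
    P ∈ cntF σ n s ↔ P.parts.card = n ∧ ∀ p ∈ P.parts, p.card ≤ σ + 1 := by
  simp [cntF]

lemma cnt_eq_cntF (σ n : ℕ) (s : Finset α) : cnt σ n s = (cntF σ n s).card := by
  rw [cnt, Nat.card_eq_fintype_card, Fintype.card_subtype, cntF]

lemma avoid_parts_of_mem {s : Finset α} (P : Finpartition s) {B : Finset α} (hB : B ∈ P.parts) :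
    (P.avoid B).parts = P.parts.erase B := by
  ext c
  rw [Finpartition.mem_avoid, mem_erase]
  constructor
  · rintro ⟨d, hd, hdB, rfl⟩
    have hne : d ≠ B := fun h => hdB (h ▸ le_refl B)
    have hdisj : Disjoint B d := (P.disjoint hd hB hne).symm
    rw [show d \ B = d from _root_.sdiff_eq_self_iff_disjoint.2 hdisj]
    exact ⟨hne, hd⟩
  · rintro ⟨hne, hc⟩
    have hdisj : Disjoint c B := P.disjoint hc hB hne
    exact ⟨c, hc, fun hle => P.ne_bot hc (hdisj.eq_bot_of_le hle),
      _root_.sdiff_eq_self_iff_disjoint.2 hdisj.symm⟩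

lemma E_eq_cntF (σ n m : ℕ) : E σ n m = (cntF σ n (univ : Finset (Fin m))).card := by
  have h : E σ n m = cnt σ n (univ : Finset (Fin m)) := rfl
  rw [h, cnt_eq_cntF]

lemma pairs_card (σ n m j : ℕ) (hj1 : 1 ≤ j) (hj2 : j ≤ σ + 1) :
    ∑ P ∈ cntF σ (n + 1) (univ : Finset (Fin m)),
      (P.parts.filter (fun B => B.card = j)).card
      = m.choose j * E σ n (m - j) := by
  have hterm : ∀ S ∈ (univ : Finset (Fin m)).powersetCard j,
      (cntF σ n ((univ : Finset (Fin m)) \ S)).card = E σ n (m - j) := by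
    intro S hS
    rw [Finset.mem_powersetCard] at hS
    rw [← cnt_eq_cntF, cnt_eq_E]
    congr 1
    rw [Finset.card_sdiff_of_subset hS.1, card_univ, Fintype.card_fin, hS.2]
  have hrhs : m.choose j * E σ n (m - j)
      = (((univ : Finset (Fin m)).powersetCard j).sigma
          (fun S => cntF σ n ((univ : Finset (Fin m)) \ S))).card := by
    rw [Finset.card_sigma, Finset.sum_congr rfl hterm, Finset.sum_const,
      Finset.card_powersetCard, card_univ, Fintype.card_fin, smul_eq_mul]
  rw [hrhs, ← Finset.card_sigma]
  refine Finset.card_bij'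
    (fun x _ => ⟨x.2, x.1.avoid x.2⟩)
    (fun y hy => by
      simp only [Finset.mem_sigma, Finset.mem_powersetCard, mem_cntF] at hy
      exact ⟨y.2.extend
        (by
          intro h
          have h2 := hy.1.2
          rw [h] at h2
          simp only [bot_eq_empty, Finset.card_empty] at h2
          omega)
        (disjoint_sdiff_self_left)
        (by rw [sup_eq_union, Finset.sdiff_union_of_subset hy.1.1]), y.1⟩)
    ?_ ?_ ?_ ?_
  · rintro ⟨P, B⟩ hx
    simp only [Finset.mem_sigma, mem_filter, mem_cntF] at hx
    obtain ⟨⟨hPn, hPs⟩, hBp, hBj⟩ := hx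
    simp only [Finset.mem_sigma, Finset.mem_powersetCard, mem_cntF]
    refine ⟨⟨Finset.subset_univ B, hBj⟩, ?_, ?_⟩
    · rw [avoid_parts_of_mem P hBp, Finset.card_erase_of_mem hBp, hPn]
      omega
    · intro p hp
      rw [avoid_parts_of_mem P hBp] at hp
      exact hPs p (Finset.mem_of_mem_erase hp)
  · rintro ⟨S, Q⟩ hy
    simp only [Finset.mem_sigma, Finset.mem_powersetCard, mem_cntF] at hy
    obtain ⟨⟨hSu, hSj⟩, hQn, hQs⟩ := hy
    have hSnotin : S ∉ Q.parts := by
      intro hmem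
      have hle := Q.le hmem
      obtain ⟨a, ha⟩ := Finset.card_pos.1 (show 0 < S.card by omega)
      have h3 := hle ha
      rw [Finset.mem_sdiff] at h3
      exact h3.2 ha
    simp only [Finset.mem_sigma, mem_filter, mem_cntF, Finpartition.extend_parts,
      Finset.mem_insert]
    refine ⟨⟨?_, ?_⟩, by simp, hSj⟩
    · rw [Finset.card_insert_of_notMem hSnotin, hQn]
    · intro p hp
      rcases hp with rfl | hp
      · omega
      · exact hQs p hp
  · rintro ⟨P, B⟩ hx
    simp only [Finset.mem_sigma, mem_filter, mem_cntF] at hx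
    obtain ⟨⟨hPn, hPs⟩, hBp, hBj⟩ := hx
    simp only
    congr 1
    apply Finpartition.ext
    rw [Finpartition.extend_parts, avoid_parts_of_mem P hBp, Finset.insert_erase hBp]
  · rintro ⟨S, Q⟩ hy
    simp only [Finset.mem_sigma, Finset.mem_powersetCard, mem_cntF] at hy
    obtain ⟨⟨hSu, hSj⟩, hQn, hQs⟩ := hy
    have hSnotin : S ∉ Q.parts := by
      intro hmem
      have hle := Q.le hmem
      obtain ⟨a, ha⟩ := Finset.card_pos.1 (show 0 < S.card by omega)
      have h3 := hle ha
      rw [Finset.mem_sdiff] at h3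
      exact h3.2 ha
    simp only
    congr 1
    apply Finpartition.ext
    rw [avoid_parts_of_mem _ (show S ∈ _ from by
        rw [Finpartition.extend_parts]; exact Finset.mem_insert_self _ _),
      Finpartition.extend_parts, Finset.erase_insert hSnotin]

lemma card_mem_Icc {σ n m : ℕ} {P : Finpartition (univ : Finset (Fin m))}
    (hP : P ∈ cntF σ n (univ : Finset (Fin m))) :
    ∀ B ∈ P.parts, B.card ∈ Icc 1 (σ + 1) := by
  rw [mem_cntF] at hP
  intro B hB
  rw [mem_Icc]
  constructor
  · rw [Nat.one_le_iff_ne_zero, ← Nat.pos_iff_ne_zero, Finset.card_pos]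
    exact Finset.nonempty_iff_ne_empty.2 (P.ne_bot hB)
  · exact hP.2 B hB

lemma key1 (σ n m : ℕ) :
    ∑ j ∈ Icc 1 (σ + 1), m.choose j * E σ n (m - j) = (n + 1) * E σ (n + 1) m := by
  have h1 : ∀ j ∈ Icc 1 (σ + 1), m.choose j * E σ n (m - j)
      = ∑ P ∈ cntF σ (n + 1) (univ : Finset (Fin m)),
          (P.parts.filter (fun B => B.card = j)).card := by
    intro j hj; rw [mem_Icc] at hj
    exact (pairs_card σ n m j hj.1 hj.2).symm
  rw [Finset.sum_congr rfl h1, Finset.sum_comm]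
  have h2 : ∀ P ∈ cntF σ (n + 1) (univ : Finset (Fin m)),
      ∑ j ∈ Icc 1 (σ + 1), (P.parts.filter (fun B => B.card = j)).card = n + 1 := by
    intro P hP
    rw [← Finset.card_eq_sum_card_fiberwise (card_mem_Icc hP)]
    exact (mem_cntF.1 hP).1
  rw [Finset.sum_congr rfl h2, Finset.sum_const, smul_eq_mul, E_eq_cntF, mul_comm]

lemma key2 (σ n m : ℕ) :
    ∑ j ∈ Icc 1 (σ + 1), j * (m.choose j * E σ n (m - j)) = m * E σ (n + 1) m := by
  have h1 : ∀ j ∈ Icc 1 (σ + 1), j * (m.choose j * E σ n (m - j))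
      = ∑ P ∈ cntF σ (n + 1) (univ : Finset (Fin m)),
          ∑ B ∈ P.parts.filter (fun B => B.card = j), B.card := by
    intro j hj; rw [mem_Icc] at hj
    rw [← pairs_card σ n m j hj.1 hj.2, Finset.mul_sum]
    refine Finset.sum_congr rfl (fun P _ => ?_)
    have h3 : ∑ B ∈ P.parts.filter (fun B => B.card = j), B.card
        = j * (P.parts.filter (fun B => B.card = j)).card := by
      rw [Finset.sum_congr rfl (fun B hB => (Finset.mem_filter.1 hB).2),
        Finset.sum_const, smul_eq_mul, mul_comm]
    rw [h3]
  rw [Finset.sum_congr rfl h1, Finset.sum_comm]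
  have h2 : ∀ P ∈ cntF σ (n + 1) (univ : Finset (Fin m)),
      ∑ j ∈ Icc 1 (σ + 1), ∑ B ∈ P.parts.filter (fun B => B.card = j), B.card = m := by
    intro P hP
    rw [Finset.sum_fiberwise_of_maps_to (card_mem_Icc hP), Finpartition.sum_card_parts,
      card_univ, Fintype.card_fin]
  rw [Finset.sum_congr rfl h2, Finset.sum_const, smul_eq_mul, E_eq_cntF, mul_comm]

lemma key_zero (σ n m : ℕ) :
    ∑ j ∈ Icc 1 (σ + 1),
      (((n : ℚ) + 1) * j - m) * ((m.choose j : ℚ)) * ((E σ n (m - j) : ℚ)) = 0 := by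
  have q1 : (∑ j ∈ Icc 1 (σ + 1), ((m.choose j : ℚ)) * (E σ n (m - j) : ℚ))
      = ((n : ℚ) + 1) * (E σ (n + 1) m : ℚ) := by
    exact_mod_cast congrArg (fun x : ℕ => (x : ℚ)) (key1 σ n m)
  have q2 : (∑ j ∈ Icc 1 (σ + 1), (j : ℚ) * ((m.choose j : ℚ) * (E σ n (m - j) : ℚ)))
      = (m : ℚ) * (E σ (n + 1) m : ℚ) := by
    exact_mod_cast congrArg (fun x : ℕ => (x : ℚ)) (key2 σ n m)
  have h : ∀ j ∈ Icc 1 (σ + 1),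
      (((n : ℚ) + 1) * j - m) * ((m.choose j : ℚ)) * ((E σ n (m - j) : ℚ))
      = ((n : ℚ) + 1) * ((j : ℚ) * ((m.choose j : ℚ) * (E σ n (m - j) : ℚ)))
        - (m : ℚ) * ((m.choose j : ℚ) * (E σ n (m - j) : ℚ)) := by
    intro j _; ring
  rw [Finset.sum_congr rfl h, Finset.sum_sub_distrib, ← Finset.mul_sum, ← Finset.mul_sum, q1, q2]
  ring

theorem stmt_3 (σ n k : ℕ) (hσ : 1 ≤ σ) (h1 : n < k) (h2 : k ≤ (σ + 1) * n) :
    (E σ n k : ℚ) = (k.factorial : ℚ) / (k - n : ℚ) *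
      ∑ i ∈ Finset.Icc 1 (min σ (k - n)),
        (((n : ℚ) + 1) * i - k + n) / ((i + 1).factorial * (k - i).factorial) *
          E σ n (k - i) := by
  have hn : 1 ≤ n := by
    rcases Nat.eq_zero_or_pos n with rfl | h
    · omega
    · exact h
  have hz := key_zero σ n (k + 1)
  have hsplit : Icc 1 (σ + 1) = insert 1 (Icc 2 (σ + 1)) := by
    ext x; simp only [Finset.mem_Icc, Finset.mem_insert]; omega
  rw [hsplit, Finset.sum_insert (by simp)] at hz
  have hmap : Icc 2 (σ + 1) = (Icc 1 σ).map (addRightEmbedding 1) := by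
    rw [Finset.map_add_right_Icc]
  rw [hmap, Finset.sum_map] at hz
  simp only [addRightEmbedding_apply] at hz
  -- normalize the j = 1 term
  rw [Nat.choose_one_right] at hz
  have hk1 : (k + 1 : ℕ) - 1 = k := by omega
  rw [hk1] at hz
  -- normalize the summand
  have hsummand : ∀ x ∈ Icc 1 σ,
      (((n : ℚ) + 1) * ((x + 1 : ℕ) : ℚ) - ((k + 1 : ℕ) : ℚ)) * (((k + 1).choose (x + 1) : ℚ))
        * ((E σ n ((k + 1) - (x + 1)) : ℚ))
      = (((n : ℚ) + 1) * ((x : ℚ) + 1) - ((k : ℚ) + 1)) * (((k + 1).choose (x + 1) : ℚ))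
        * ((E σ n (k - x) : ℚ)) := by
    intro x _
    have : (k + 1) - (x + 1) = k - x := by omega
    rw [this]
    push_cast
    ring
  rw [Finset.sum_congr rfl hsummand] at hz
  -- the main reduced identity
  have hsum : ∑ x ∈ Icc 1 σ,
      (((n : ℚ) + 1) * ((x : ℚ) + 1) - ((k : ℚ) + 1)) * (((k + 1).choose (x + 1) : ℚ))
        * ((E σ n (k - x) : ℚ))
      = ((k : ℚ) - n) * ((k : ℚ) + 1) * (E σ n k : ℚ) := by
    push_cast at hz
    linarith [hz]
  -- restrict to Icc 1 (min σ (k - n))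
  have hsub : ∑ x ∈ Icc 1 (min σ (k - n)),
      (((n : ℚ) + 1) * ((x : ℚ) + 1) - ((k : ℚ) + 1)) * (((k + 1).choose (x + 1) : ℚ))
        * ((E σ n (k - x) : ℚ))
      = ((k : ℚ) - n) * ((k : ℚ) + 1) * (E σ n k : ℚ) := by
    rw [← hsum]
    apply Finset.sum_subset
    · apply Finset.Icc_subset_Icc_right
      exact min_le_left _ _
    · intro x hx hnx
      rw [mem_Icc] at hx
      rw [mem_Icc] at hnx
      have hxk : k - x < n := by omega
      rw [E_eq_zero hxk]
      push_cast
      ring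
  -- final algebra
  have hkn : ((k : ℚ) - n) ≠ 0 := by
    have : (n : ℚ) < k := by exact_mod_cast h1
    linarith
  have hk1' : ((k : ℚ) + 1) ≠ 0 := by positivity
  have hterm : ∀ i ∈ Icc 1 (min σ (k - n)),
      (((n : ℚ) + 1) * i - k + n) / ((i + 1).factorial * (k - i).factorial) * E σ n (k - i)
      = (((n : ℚ) + 1) * ((i : ℚ) + 1) - ((k : ℚ) + 1)) * (((k + 1).choose (i + 1) : ℚ))
        * ((E σ n (k - i) : ℚ)) / ((k.factorial : ℚ) * ((k : ℚ) + 1)) := by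
    intro i hi
    rw [mem_Icc] at hi
    have hik : i + 1 ≤ k + 1 := by omega
    rw [Nat.cast_choose ℚ hik]
    have h3 : (k + 1) - (i + 1) = k - i := by omega
    rw [h3]
    have h4 : ((k + 1).factorial : ℚ) = ((k : ℚ) + 1) * (k.factorial : ℚ) := by
      rw [Nat.factorial_succ]; push_cast; ring
    rw [h4]
    have hf1 : ((i + 1).factorial : ℚ) ≠ 0 := by positivity
    have hf2 : (((k - i).factorial : ℚ)) ≠ 0 := by positivity
    have hf3 : ((k.factorial : ℚ)) ≠ 0 := by positivity
    field_simp
    ring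
  have hmain : (k.factorial : ℚ) / ((k : ℚ) - n) *
      ∑ i ∈ Finset.Icc 1 (min σ (k - n)),
        (((n : ℚ) + 1) * i - k + n) / ((i + 1).factorial * (k - i).factorial) * E σ n (k - i)
      = E σ n k := by
    rw [Finset.sum_congr rfl hterm, ← Finset.sum_div, hsub]
    have hf3 : ((k.factorial : ℚ)) ≠ 0 := by positivity
    field_simp
  exact hmain.symm
end

section
/- For σ ≥ 0 and n ≥ 0, G_σ(n) = (1/n!) · Σ_{i₁=1}^{σ+1} Σ_{i₂=1}^{σ+1} ⋯ Σ_{i_n=1}^{σ+1} (i₁ + i₂ + ⋯ + i_n)! / (i₁! i₂! ⋯ i_n!). -/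
open Finset

lemma card_filter_subtype {α β : Type} [Fintype β] [DecidableEq β] [DecidableEq α]
    (p : β → Prop) [DecidablePred p] (f : β → α) (x : α) (h : ∀ b, f b = x → p b) :
    (univ.filter fun b : {b // p b} => f b.1 = x).card = (univ.filter fun b => f b = x).card := by
  apply Finset.card_bij (fun b _ => b.1)
  · intro b hb
    simp only [mem_filter, mem_univ, true_and] at hb ⊢
    exact hb
  · intro b _ b' _ hh
    exact Subtype.ext hh
  · intro b hb
    simp only [mem_filter, mem_univ, true_and] at hb
    exact ⟨⟨b, h b hb⟩, by simp [hb], rfl⟩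

lemma lemmaA {α : Type} [DecidableEq α] [Fintype α] (s : Finset α) (i : α → ℕ) :
    ∀ (β : Type) [Fintype β] [DecidableEq β], (∑ a ∈ s, i a) = Fintype.card β →
    ((univ : Finset (β → α)).filter fun g =>
        (∀ b, g b ∈ s) ∧ ∀ a ∈ s, (univ.filter fun b => g b = a).card = i a).card
      = Nat.multinomial s i := by
  induction s using Finset.cons_induction with
  | empty =>
    intro β _ _ hsum
    simp only [Finset.sum_empty] at hsum
    haveI : IsEmpty β := by
      rw [← Fintype.card_eq_zero_iff]
      omega
    rw [Nat.multinomial_empty, Finset.filter_true_of_mem, Finset.card_univ, Fintype.card_fun]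
    · simp
    · intro g _
      exact ⟨fun b => isEmptyElim b, fun a ha => absurd ha (notMem_empty a)⟩
  | cons a s' ha ih =>
    intro β _ _ hsum
    rw [Finset.sum_cons] at hsum
    rw [Finset.card_eq_sum_card_fiberwise
      (f := fun g : β → α => univ.filter fun b => g b = a)
      (t := Finset.powersetCard (i a) (univ : Finset β))
      (fun g hg => by
        rw [mem_coe, mem_filter] at hg
        exact mem_coe.2 (Finset.mem_powersetCard.2 ⟨subset_univ _, hg.2.2 a (mem_cons_self a s')⟩))]
    have hterm : ∀ T ∈ Finset.powersetCard (i a) (univ : Finset β),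
        (((univ : Finset (β → α)).filter fun g =>
            (∀ b, g b ∈ cons a s' ha) ∧
              ∀ x ∈ cons a s' ha, (univ.filter fun b => g b = x).card = i x).filter
          fun g => (univ.filter fun b => g b = a) = T).card = Nat.multinomial s' i := by
      intro T hT
      rw [Finset.mem_powersetCard] at hT
      obtain ⟨-, hTcard⟩ := hT
      rw [Finset.filter_filter]
      have hcard : ∑ x ∈ s', i x = Fintype.card {b : β // b ∉ T} := by
        have h1 : Fintype.card {b : β // b ∉ T} = Fintype.card β - T.card := by
          simpa using Fintype.card_subtype_compl (fun b => b ∈ T)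
        omega
      rw [← ih {b : β // b ∉ T} hcard]
      apply Finset.card_bij' (fun g _ => fun b : {b : β // b ∉ T} => g b.1)
        (fun g' _ => fun b : β => if h : b ∈ T then a else g' ⟨b, h⟩)
      · -- forward maps into target
        intro g hg
        rw [mem_filter] at hg
        obtain ⟨-, ⟨hmem, hfib⟩, hfa⟩ := hg
        rw [mem_filter]
        refine ⟨mem_univ _, fun b => ?_, fun x hx => ?_⟩
        · rcases Finset.mem_cons.1 (hmem b.1) with h | h
          · have hbm : (b : β) ∈ filter (fun b => g b = a) univ := by simp [h]
            rw [hfa] at hbm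
            exact absurd hbm b.2
          · exact h
        · rw [card_filter_subtype (fun b => b ∉ T) g x (fun b hb hbT => ?_)]
          · exact hfib x (mem_cons_of_mem hx)
          · rw [← hfa, mem_filter] at hbT
            exact ha ((hb.symm.trans hbT.2) ▸ hx)
      · -- backward maps into source
        intro g' hg'
        rw [mem_filter] at hg'
        obtain ⟨-, hmem, hfib⟩ := hg'
        have hfa : (univ.filter fun b => (if h : b ∈ T then a else g' ⟨b, h⟩) = a) = T := by
          ext b
          simp only [mem_filter, mem_univ, true_and]
          constructor
          · intro hb
            by_contra hbT
            rw [dif_neg hbT] at hb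
            exact ha (hb ▸ hmem ⟨b, hbT⟩)
          · intro hb
            rw [dif_pos hb]
        rw [mem_filter]
        refine ⟨mem_univ _, ⟨fun b => ?_, fun x hx => ?_⟩, hfa⟩
        · by_cases h : b ∈ T
          · simp only [dif_pos h]; exact mem_cons_self a s'
          · simp only [dif_neg h]; exact mem_cons_of_mem (hmem ⟨b, h⟩)
        · rcases Finset.mem_cons.1 hx with rfl | hx'
          · rw [hfa, hTcard]
          · rw [← card_filter_subtype (fun b => b ∉ T)
              (fun b => if h : b ∈ T then a else g' ⟨b, h⟩) x
              (fun b hb hbT => by simp only [dif_pos hbT] at hb; exact ha (hb ▸ hx'))]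
            rw [← hfib x hx']
            congr 1
            apply Finset.filter_congr
            intro b _
            rw [dif_neg b.2]
      · -- left inverse
        intro g hg
        rw [mem_filter] at hg
        obtain ⟨-, -, hfa⟩ := hg
        funext b
        by_cases h : b ∈ T
        · have h2 := h
          rw [← hfa, mem_filter] at h2
          simp only [dif_pos h]
          exact h2.2.symm
        · simp only [dif_neg h]
      · -- right inverse
        intro g' _
        funext b
        simp only [dif_neg b.2]
    rw [Finset.sum_congr rfl hterm, Finset.sum_const, Finset.card_powersetCard,
      Finset.card_univ, ← hsum, smul_eq_mul, Nat.multinomial_cons]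


lemma part_ext {γ : Type} [Fintype γ] [DecidableEq γ]
    (P Q : Finpartition (univ : Finset γ)) (h : ∀ x, P.part x = Q.part x) : P = Q := by
  apply Finpartition.ext
  ext p
  constructor
  · intro hp
    obtain ⟨x, hx⟩ := P.nonempty_of_mem_parts hp
    rw [← P.part_eq_of_mem hp hx, h]
    exact Q.part_mem.2 (mem_univ x)
  · intro hp
    obtain ⟨x, hx⟩ := Q.nonempty_of_mem_parts hp
    rw [← Q.part_eq_of_mem hp hx, ← h]
    exact P.part_mem.2 (mem_univ x)

noncomputable instance fpFintype (k : ℕ) : Fintype (Finpartition (univ : Finset (Fin k))) :=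
  Fintype.ofInjective Finpartition.parts (fun _ _ h => Finpartition.ext h)

lemma lemmaB (σ n k : ℕ) :
    ((univ : Finset (Fin k → Fin n)).filter fun g =>
        ∀ r, 1 ≤ (univ.filter fun x => g x = r).card ∧
          (univ.filter fun x => g x = r).card ≤ σ + 1).card
      = n.factorial * E σ n k := by
  classical
  set Pt := {P : Finpartition (Finset.univ : Finset (Fin k)) //
    P.parts.card = n ∧ ∀ p ∈ P.parts, p.card ≤ σ + 1} with hPt
  -- the map Φ
  set St := ((univ : Finset (Fin k → Fin n)).filter fun g =>
        ∀ r, 1 ≤ (univ.filter fun x => g x = r).card ∧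
          (univ.filter fun x => g x = r).card ≤ σ + 1) with hSt
  have hfiber : ∀ (P : Finpartition (univ : Finset (Fin k)))
      (e : Fin n ≃ {p // p ∈ P.parts}) (r : Fin n),
      (univ.filter fun x => e.symm ⟨P.part x, P.part_mem.2 (mem_univ x)⟩ = r) = (e r).1 := by
    intro P e r
    ext x
    simp only [mem_filter, mem_univ, true_and, Equiv.symm_apply_eq]
    rw [Subtype.ext_iff]
    constructor
    · intro h
      exact h ▸ P.mem_part (mem_univ x)
    · intro h
      exact P.part_eq_of_mem (e r).2 h
  have hΦmem : ∀ (P : Pt) (e : Fin n ≃ {p // p ∈ P.1.parts}),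
      (fun x => e.symm ⟨P.1.part x, P.1.part_mem.2 (mem_univ x)⟩) ∈ St := by
    intro P e
    rw [hSt, mem_filter]
    refine ⟨mem_univ _, fun r => ?_⟩
    rw [hfiber P.1 e r]
    constructor
    · rw [Nat.one_le_iff_ne_zero, ← Nat.pos_iff_ne_zero, card_pos]
      exact P.1.nonempty_of_mem_parts (e r).2
    · exact P.2.2 _ (e r).2
  let Φ : (Σ P : Pt, (Fin n ≃ {p // p ∈ P.1.parts})) → {g // g ∈ St} :=
    fun x => ⟨fun y => x.2.symm ⟨x.1.1.part y, x.1.1.part_mem.2 (mem_univ y)⟩, hΦmem x.1 x.2⟩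
  have hΦbij : Function.Bijective Φ := by
    constructor
    · rintro ⟨⟨P, hP⟩, e⟩ ⟨⟨P', hP'⟩, e'⟩ h
      rw [Subtype.ext_iff] at h
      simp only [Φ] at h
      have hg : ∀ x, (e.symm ⟨P.part x, P.part_mem.2 (mem_univ x)⟩ : Fin n)
          = e'.symm ⟨P'.part x, P'.part_mem.2 (mem_univ x)⟩ := fun x => congrFun h x
      have hpart : ∀ x, P.part x = P'.part x := by
        intro x
        have h1 := hfiber P e (e.symm ⟨P.part x, P.part_mem.2 (mem_univ x)⟩)
        have h2 := hfiber P' e' (e'.symm ⟨P'.part x, P'.part_mem.2 (mem_univ x)⟩)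
        simp only [Equiv.apply_symm_apply] at h1 h2
        rw [← h1, ← h2]
        ext y
        simp only [mem_filter, mem_univ, true_and]
        rw [hg y, hg x]
      obtain rfl : P = P' := part_ext P P' hpart
      obtain rfl : e = e' := by
        apply Equiv.ext
        intro r
        apply Subtype.ext
        rw [← hfiber P e r, ← hfiber P e' r]
        ext x
        simp only [mem_filter, mem_univ, true_and]
        rw [hg x]
      rfl
    · rintro ⟨g, hg⟩
      rw [hSt, mem_filter] at hg
      have hbd := hg.2
      have hne : ∀ r : Fin n, (univ.filter fun x => g x = r).Nonempty := by
        intro r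
        rw [← card_pos]
        exact (hbd r).1
      have hfinj : Function.Injective (fun r : Fin n => univ.filter fun x => g x = r) := by
        intro r r' h
        obtain ⟨x, hx⟩ := hne r
        have heq : (univ.filter fun x => g x = r) = univ.filter fun x => g x = r' := h
        have hx' : x ∈ univ.filter fun x => g x = r' := heq ▸ hx
        rw [mem_filter] at hx hx'
        exact hx.2.symm.trans hx'.2
      set P : Finpartition (univ : Finset (Fin k)) :=
        { parts := univ.image fun r : Fin n => univ.filter fun x => g x = r
          supIndep := by
            rw [Finset.supIndep_iff_pairwiseDisjoint]
            intro p hp q hq hne'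
            simp only [coe_image, coe_univ, Set.image_univ, Set.mem_range] at hp hq
            obtain ⟨r, rfl⟩ := hp
            obtain ⟨r', rfl⟩ := hq
            have hrr : r ≠ r' := fun h => hne' (by rw [h])
            simp only [Function.onFun, id_eq]
            rw [Finset.disjoint_left]
            intro x hx hx'
            rw [mem_filter] at hx hx'
            exact hrr (hx.2.symm.trans hx'.2)
          sup_parts := by
            apply le_antisymm
            · exact Finset.sup_le fun p _ => le_top
            · intro x _
              rw [Finset.mem_sup]
              exact ⟨univ.filter fun y => g y = g x,
                mem_image_of_mem _ (mem_univ (g x)), by simp⟩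
          bot_notMem := by
            rw [bot_eq_empty, mem_image]
            rintro ⟨r, -, hr⟩
            obtain ⟨x, hx⟩ := hne r
            rw [hr] at hx
            exact absurd hx (notMem_empty x) } with hPdef
      have hparts : P.parts = univ.image fun r : Fin n => univ.filter fun x => g x = r := rfl
      have hPcond : P.parts.card = n ∧ ∀ p ∈ P.parts, p.card ≤ σ + 1 := by
        constructor
        · rw [hparts, Finset.card_image_of_injective _ hfinj, card_univ, Fintype.card_fin]
        · intro p hp
          rw [hparts, mem_image] at hp
          obtain ⟨r, -, rfl⟩ := hp
          exact (hbd r).2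
      have hemem : ∀ r : Fin n, (univ.filter fun x => g x = r) ∈ P.parts := by
        intro r
        rw [hparts]
        exact mem_image_of_mem _ (mem_univ r)
      have hebij : Function.Bijective
          (fun r : Fin n => (⟨univ.filter fun x => g x = r, hemem r⟩ : {p // p ∈ P.parts})) := by
        constructor
        · intro r r' h
          exact hfinj (Subtype.ext_iff.1 h)
        · rintro ⟨p, hp⟩
          rw [hparts, mem_image] at hp
          obtain ⟨r, -, rfl⟩ := hp
          exact ⟨r, rfl⟩
      refine ⟨⟨⟨P, hPcond⟩, Equiv.ofBijective _ hebij⟩, ?_⟩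
      apply Subtype.ext
      funext x
      simp only [Φ]
      rw [Equiv.symm_apply_eq, Equiv.ofBijective_apply]
      apply Subtype.ext
      simp only
      exact P.part_eq_of_mem (hemem (g x)) (by simp)
  have h1 : Nat.card {g // g ∈ St} = Nat.card (Σ P : Pt, (Fin n ≃ {p // p ∈ P.1.parts})) :=
    (Nat.card_eq_of_bijective Φ hΦbij).symm
  rw [Nat.card_eq_finsetCard] at h1
  rw [h1, Nat.card_eq_fintype_card, Fintype.card_sigma]
  have h2 : ∀ P : Pt, Fintype.card (Fin n ≃ {p // p ∈ P.1.parts}) = n.factorial := by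
    intro P
    have hc : Fintype.card {p // p ∈ P.1.parts} = n := by
      rw [Fintype.card_coe]
      exact P.2.1
    rw [Fintype.card_equiv ((Fintype.equivFinOfCardEq hc).symm), Fintype.card_fin]
  rw [Finset.sum_congr rfl (fun P _ => h2 P), Finset.sum_const, smul_eq_mul, card_univ,
    mul_comm, E, Nat.card_eq_fintype_card]

theorem stmt_4 (σ n : ℕ) :
    (G σ n : ℚ) = (1 / n.factorial : ℚ) *
      ∑ i ∈ Fintype.piFinset fun _ : Fin n => Finset.Icc 1 (σ + 1),
        ((∑ r, i r).factorial : ℚ) / ∏ r, ((i r).factorial : ℚ) := by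
  classical
  have key : n.factorial * G σ n
      = ∑ i ∈ Fintype.piFinset (fun _ : Fin n => Finset.Icc 1 (σ + 1)),
          Nat.multinomial Finset.univ i := by
    rw [G, Finset.mul_sum]
    calc ∑ k ∈ Finset.Icc n ((σ + 1) * n), n.factorial * E σ n k
        = ∑ k ∈ Finset.Icc n ((σ + 1) * n),
            ((univ : Finset (Fin k → Fin n)).filter fun g =>
              ∀ r, 1 ≤ (univ.filter fun x => g x = r).card ∧
                (univ.filter fun x => g x = r).card ≤ σ + 1).card :=
          Finset.sum_congr rfl fun k _ => (lemmaB σ n k).symm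
      _ = ∑ k ∈ Finset.Icc n ((σ + 1) * n),
            ∑ i ∈ Fintype.piFinset (fun _ : Fin n => Finset.Icc 1 (σ + 1)),
              (((univ : Finset (Fin k → Fin n)).filter fun g =>
                ∀ r, 1 ≤ (univ.filter fun x => g x = r).card ∧
                  (univ.filter fun x => g x = r).card ≤ σ + 1).filter fun g =>
                    (fun r => (univ.filter fun x => g x = r).card) = i).card := by
          refine Finset.sum_congr rfl fun k _ => ?_
          apply Finset.card_eq_sum_card_fiberwise
          intro g hg
          rw [mem_coe, mem_filter] at hg
          rw [mem_coe, Fintype.mem_piFinset]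
          intro r
          rw [Finset.mem_Icc]
          exact hg.2 r
      _ = ∑ i ∈ Fintype.piFinset (fun _ : Fin n => Finset.Icc 1 (σ + 1)),
            ∑ k ∈ Finset.Icc n ((σ + 1) * n),
              (((univ : Finset (Fin k → Fin n)).filter fun g =>
                ∀ r, 1 ≤ (univ.filter fun x => g x = r).card ∧
                  (univ.filter fun x => g x = r).card ≤ σ + 1).filter fun g =>
                    (fun r => (univ.filter fun x => g x = r).card) = i).card :=
          Finset.sum_comm
      _ = ∑ i ∈ Fintype.piFinset (fun _ : Fin n => Finset.Icc 1 (σ + 1)),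
            Nat.multinomial Finset.univ i := by
          refine Finset.sum_congr rfl fun i hi => ?_
          rw [Fintype.mem_piFinset] at hi
          have hib : ∀ r, 1 ≤ i r ∧ i r ≤ σ + 1 := fun r => Finset.mem_Icc.1 (hi r)
          have hcount : ∀ k, (((univ : Finset (Fin k → Fin n)).filter fun g =>
                ∀ r, 1 ≤ (univ.filter fun x => g x = r).card ∧
                  (univ.filter fun x => g x = r).card ≤ σ + 1).filter fun g =>
                    (fun r => (univ.filter fun x => g x = r).card) = i).card
              = if (∑ r, i r) = k then Nat.multinomial Finset.univ i else 0 := by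
            intro k
            split_ifs with h
            · rw [Finset.filter_filter]
              rw [← lemmaA (univ : Finset (Fin n)) i (Fin k)
                (by rw [Fintype.card_fin]; exact h)]
              congr 1
              ext g
              simp only [Finset.mem_filter, Finset.mem_univ, true_and]
              constructor
              · rintro ⟨-, h2⟩
                exact ⟨fun b => trivial, fun a _ => congrFun h2 a⟩
              · rintro ⟨-, h2⟩
                refine ⟨fun r => ?_, funext fun r => h2 r trivial⟩
                rw [h2 r trivial]
                exact hib r
            · rw [Finset.card_eq_zero, Finset.filter_eq_empty_iff]
              intro g _ hp
              apply h
              have hk : (univ : Finset (Fin k)).card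
                  = ∑ r : Fin n, (univ.filter fun x => g x = r).card :=
                Finset.card_eq_sum_card_fiberwise fun x _ => mem_univ (g x)
              have : ∑ r, i r = ∑ r : Fin n, (univ.filter fun x => g x = r).card := by
                refine Finset.sum_congr rfl fun r _ => ?_
                exact (congrFun hp r).symm
              rw [this, ← hk, card_univ, Fintype.card_fin]
          rw [Finset.sum_congr rfl fun k _ => hcount k, Finset.sum_ite_eq, if_pos]
          rw [Finset.mem_Icc]
          constructor
          · have := Finset.card_nsmul_le_sum (univ : Finset (Fin n)) i 1
              fun r _ => (hib r).1
            simpa using this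
          · have := Finset.sum_le_card_nsmul (univ : Finset (Fin n)) i (σ + 1)
              fun r _ => (hib r).2
            simpa [mul_comm] using this
  have hcast : ∀ i : Fin n → ℕ, ((Nat.multinomial (Finset.univ : Finset (Fin n)) i : ℕ) : ℚ)
      = ((∑ r, i r).factorial : ℚ) / ∏ r, ((i r).factorial : ℚ) := by
    intro i
    have hs := Nat.multinomial_spec (Finset.univ : Finset (Fin n)) i
    have hprod : (∏ r, ((i r).factorial : ℚ)) ≠ 0 := by positivity
    rw [eq_div_iff hprod]
    have := congrArg (fun m : ℕ => (m : ℚ)) hs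
    push_cast at this
    rw [mul_comm] at this
    exact this
  have keyQ := congrArg (fun m : ℕ => (m : ℚ)) key
  push_cast at keyQ
  have hsum : ∑ i ∈ Fintype.piFinset (fun _ : Fin n => Finset.Icc 1 (σ + 1)),
      ((Nat.multinomial (Finset.univ : Finset (Fin n)) i : ℕ) : ℚ)
      = ∑ i ∈ Fintype.piFinset (fun _ : Fin n => Finset.Icc 1 (σ + 1)),
        ((∑ r, i r).factorial : ℚ) / ∏ r, ((i r).factorial : ℚ) :=
    Finset.sum_congr rfl fun i _ => hcast i
  rw [hsum] at keyQ
  have hne : ((n.factorial : ℚ)) ≠ 0 := Nat.cast_ne_zero.2 (Nat.factorial_ne_zero n)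
  rw [← keyQ, one_div, inv_mul_cancel_left₀ hne]
end

section
/- For σ ≥ 1 and n ≥ 0, G_σ(n) = (1/n!) ∫₀^∞ e^{-y} (Σ_{j=1}^{σ+1} y^j / j!)^n dy. -/
open Finset

lemma nat_card_sigma' {ι : Type*} [Fintype ι] (f : ι → Type*) [∀ i, Finite (f i)] :
    Nat.card (Σ i, f i) = ∑ i, Nat.card (f i) := by
  letI := fun i => Fintype.ofFinite (f i)
  simp [Nat.card_eq_fintype_card]

lemma card_tuples {ι α : Type*} [Fintype ι] [DecidableEq ι] [Fintype α] [DecidableEq α]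
    (s : Finset ι) (f : ι → ℕ) (t : Finset α) (h : ∑ i ∈ s, f i = t.card) :
    Nat.card {p : ι → Finset α //
      (∀ i ∈ s, ∀ j ∈ s, i ≠ j → Disjoint (p i) (p j)) ∧ s.sup p = t ∧
      (∀ i ∈ s, (p i).card = f i) ∧ ∀ i ∉ s, p i = ∅} = Nat.multinomial s f := by
  induction s using Finset.induction generalizing t with
  | empty =>
    have ht : t = ∅ := Finset.card_eq_zero.mp (by simpa using h.symm)
    subst ht
    rw [show Nat.multinomial ∅ f = 1 by simp [Nat.multinomial]]
    rw [Nat.card_eq_one_iff_unique]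
    constructor
    · constructor
      intro ⟨p, hp⟩ ⟨q, hq⟩
      apply Subtype.ext
      funext i
      show p i = q i
      rw [hp.2.2.2 i (notMem_empty i), hq.2.2.2 i (notMem_empty i)]
    · exact ⟨⟨fun _ => ∅, by simp⟩⟩
  | insert _ _ ha ih =>
    rename_i a s'
    rw [Finset.sum_insert ha] at h
    -- fiber decomposition over the value of `p a`
    set T := {p : ι → Finset α //
      (∀ i ∈ insert a s', ∀ j ∈ insert a s', i ≠ j → Disjoint (p i) (p j)) ∧
      (insert a s').sup p = t ∧
      (∀ i ∈ insert a s', (p i).card = f i) ∧ ∀ i ∉ insert a s', p i = ∅} with hT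
    have hmem : ∀ x : T, x.1 a ∈ t.powersetCard (f a) := by
      intro ⟨p, hp⟩
      rw [mem_powersetCard]
      refine ⟨?_, hp.2.2.1 a (mem_insert_self a s')⟩
      have h2 := le_sup (f := p) (mem_insert_self a s')
      rw [hp.2.1] at h2
      exact h2
    let g : T → ↥(t.powersetCard (f a)) := fun x => ⟨x.1 a, hmem x⟩
    have h1 : Nat.card T = ∑ b : ↥(t.powersetCard (f a)), Nat.card {x : T // g x = b} := by
      rw [← nat_card_sigma']
      exact (Nat.card_congr (Equiv.sigmaFiberEquiv g)).symm
    have h2 : ∀ b : ↥(t.powersetCard (f a)), Nat.card {x : T // g x = b} =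
        Nat.multinomial s' f := by
      rintro ⟨b, hb⟩
      rw [mem_powersetCard] at hb
      have hcard : ∑ i ∈ s', f i = (t \ b).card := by
        rw [card_sdiff_of_subset hb.1, hb.2, ← h, Nat.add_sub_cancel_left]
      have key := ih (t \ b) hcard
      rw [← key]
      apply Nat.card_congr
      refine ⟨fun x => ⟨Function.update x.1.1 a ∅, ?_⟩, fun q => ⟨⟨Function.update q.1 a b, ?_⟩, ?_⟩, ?_, ?_⟩
      · -- forward conditions
        obtain ⟨⟨p, hp⟩, hx⟩ := x
        have hpa : p a = b := congrArg Subtype.val hx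
        have hupd : ∀ i ∈ s', Function.update p a ∅ i = p i := fun i hi =>
          Function.update_of_ne (fun hia => ha (by rw [← hia]; exact hi)) _ _
        have hd : Disjoint (p a) (s'.sup p) := by
          rw [Finset.disjoint_sup_right]
          intro i hi
          exact hp.1 a (mem_insert_self a s') i (mem_insert_of_mem hi)
            (fun hia => ha (by rw [hia]; exact hi))
        have hsup : s'.sup p = t \ b := by
          rw [← hpa, ← hp.2.1, sup_insert, sup_eq_union, Finset.union_sdiff_cancel_left hd]
        refine ⟨?_, ?_, ?_, ?_⟩
        · intro i hi j hj hij
          rw [hupd i hi, hupd j hj]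
          exact hp.1 i (mem_insert_of_mem hi) j (mem_insert_of_mem hj) hij
        · rw [Finset.sup_congr rfl hupd, hsup]
        · intro i hi
          rw [hupd i hi]
          exact hp.2.2.1 i (mem_insert_of_mem hi)
        · intro i hi
          by_cases hia : i = a
          · subst hia; exact Function.update_self _ _ _
          · rw [Function.update_of_ne hia]
            exact hp.2.2.2 i (by simp [hia, hi])
      · -- backward conditions
        obtain ⟨q, hq⟩ := q
        have hupd : ∀ i ∈ s', Function.update q a b i = q i := fun i hi =>
          Function.update_of_ne (fun hia => ha (by rw [← hia]; exact hi)) _ _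
        have hsup' : s'.sup (Function.update q a b) = t \ b :=
          (Finset.sup_congr rfl hupd).trans hq.2.1
        refine ⟨?_, ?_, ?_, ?_⟩
        · intro i hi j hj hij
          rcases mem_insert.1 hi with rfl | hi'
          · rw [Function.update_self]
            rcases mem_insert.1 hj with rfl | hj'
            · exact absurd rfl hij
            · rw [hupd j hj']
              have : q j ≤ t \ b := hq.2.1 ▸ le_sup hj'
              exact Finset.disjoint_sdiff.mono_right this
          · rcases mem_insert.1 hj with rfl | hj'
            · rw [Function.update_self, hupd i hi']
              have : q i ≤ t \ b := hq.2.1 ▸ le_sup hi'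
              exact (Finset.disjoint_sdiff.mono_right this).symm
            · rw [hupd i hi', hupd j hj']
              exact hq.1 i hi' j hj' hij
        · rw [sup_insert, Function.update_self, hsup', sup_eq_union, Finset.union_sdiff_of_subset hb.1]
        · intro i hi
          rcases mem_insert.1 hi with rfl | hi'
          · rw [Function.update_self, hb.2]
          · rw [hupd i hi']
            exact hq.2.2.1 i hi'
        · intro i hi
          rw [Function.update_of_ne (fun hia => hi (by rw [hia]; exact mem_insert_self a s'))]
          exact hq.2.2.2 i (fun hi' => hi (mem_insert_of_mem hi'))
      · -- g value
        apply Subtype.ext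
        exact Function.update_self _ _ _
      · -- left inverse
        rintro ⟨⟨p, hp⟩, hx⟩
        have hpa : p a = b := congrArg Subtype.val hx
        apply Subtype.ext; apply Subtype.ext
        simp only
        rw [Function.update_idem, hpa.symm, Function.update_eq_self]
      · -- right inverse
        rintro ⟨q, hq⟩
        apply Subtype.ext
        simp only
        rw [Function.update_idem, ← hq.2.2.2 a ha, Function.update_eq_self]
    rw [show Nat.multinomial (insert a s') f
        = (f a + ∑ i ∈ s', f i).choose (f a) * Nat.multinomial s' f from
        Nat.multinomial_insert ha f]
    rw [h1]
    simp only [h2]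
    rw [Finset.sum_const, card_univ, Fintype.card_coe, card_powersetCard, smul_eq_mul, h]

/-- The predicate describing ordered partitions with block sizes in `[1, σ+1]`. -/
def PredA (σ n k : ℕ) (p : Fin n → Finset (Fin k)) : Prop :=
  (∀ i j : Fin n, i ≠ j → Disjoint (p i) (p j)) ∧ univ.sup p = univ ∧
    ∀ i, 1 ≤ (p i).card ∧ (p i).card ≤ σ + 1

lemma predA_inj {σ n k : ℕ} {p : Fin n → Finset (Fin k)} (hp : PredA σ n k p) :
    Function.Injective p := by
  intro i j hij
  by_contra hne
  have hd := hp.1 i j hne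
  rw [hij, disjoint_self] at hd
  have := (hp.2.2 j).1
  rw [hd] at this
  simp at this

/-- The partition associated to an ordered partition. -/
def toPart {σ n k : ℕ} (p : Fin n → Finset (Fin k)) (hp : PredA σ n k p) :
    Finpartition (Finset.univ : Finset (Fin k)) where
  parts := image p univ
  supIndep := by
    rw [Finset.supIndep_iff_pairwiseDisjoint]
    rintro x hx y hy hxy
    obtain ⟨i, -, rfl⟩ := mem_image.1 (mem_coe.1 hx)
    obtain ⟨j, -, rfl⟩ := mem_image.1 (mem_coe.1 hy)
    exact hp.1 i j (fun h => hxy (congrArg p h))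
  sup_parts := by
    rw [sup_image]
    simpa using hp.2.1
  bot_notMem := by
    intro hmem
    obtain ⟨i, -, hi⟩ := mem_image.1 hmem
    have h1 := (hp.2.2 i).1
    rw [hi] at h1
    simp at h1

lemma toPart_card {σ n k : ℕ} (p : Fin n → Finset (Fin k)) (hp : PredA σ n k p) :
    (toPart p hp).parts.card = n := by
  rw [toPart, card_image_of_injective _ (predA_inj hp), card_univ, Fintype.card_fin]

lemma toPart_bound {σ n k : ℕ} (p : Fin n → Finset (Fin k)) (hp : PredA σ n k p) :
    ∀ q ∈ (toPart p hp).parts, q.card ≤ σ + 1 := by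
  intro q hq
  obtain ⟨i, -, rfl⟩ := mem_image.1 hq
  exact (hp.2.2 i).2

lemma cardA (σ n k : ℕ) :
    Nat.card {p : Fin n → Finset (Fin k) // PredA σ n k p} = n.factorial * E σ n k := by
  classical
  set T := {p : Fin n → Finset (Fin k) // PredA σ n k p} with hT
  set PS := {P : Finpartition (Finset.univ : Finset (Fin k)) //
    P.parts.card = n ∧ ∀ p ∈ P.parts, p.card ≤ σ + 1} with hPS
  let g : T → PS := fun x => ⟨toPart x.1 x.2, toPart_card x.1 x.2, toPart_bound x.1 x.2⟩
  have h1 : Nat.card T = ∑ P : PS, Nat.card {x : T // g x = P} := by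
    rw [← nat_card_sigma']
    exact (Nat.card_congr (Equiv.sigmaFiberEquiv g)).symm
  have h2 : ∀ P : PS, Nat.card {x : T // g x = P} = n.factorial := by
    intro P
    have hfe : {x : T // g x = P} ≃ (Fin n ≃ ↥(P.1.parts)) := by
      refine ⟨fun x => ?_, fun e => ?_, ?_, ?_⟩
      · -- forward
        have hparts : P.1.parts = image x.1.1 univ :=
          (congrArg (fun z : PS => z.1.parts) x.2).symm
        refine Equiv.ofBijective
          (fun i => (⟨x.1.1 i, by rw [hparts]; exact mem_image_of_mem _ (mem_univ i)⟩ :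
            ↥(P.1.parts))) ⟨?_, ?_⟩
        · intro i j hij
          exact predA_inj x.1.2 (congrArg Subtype.val hij)
        · rintro ⟨q, hq⟩
          rw [hparts] at hq
          obtain ⟨i, -, rfl⟩ := mem_image.1 hq
          exact ⟨i, rfl⟩
      · -- backward
        have himg : image (fun i => ((e i : Finset (Fin k)))) univ = P.1.parts := by
          ext q
          simp only [mem_image, mem_univ, true_and]
          constructor
          · rintro ⟨i, rfl⟩; exact (e i).2
          · intro hq; exact ⟨e.symm ⟨q, hq⟩, by rw [Equiv.apply_symm_apply]⟩
        have hpred : PredA σ n k (fun i => ((e i : Finset (Fin k)))) := by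
          refine ⟨?_, ?_, ?_⟩
          · intro i j hij
            exact P.1.disjoint (e i).2 (e j).2
              (fun h => hij (e.injective (Subtype.ext h)))
          · have := Finset.sup_image univ (fun i => ((e i : Finset (Fin k)))) id
            rw [himg, P.1.sup_parts] at this
            simpa using this.symm
          · intro i
            exact ⟨(P.1.nonempty_of_mem_parts (e i).2).card_pos,
              P.2.2 _ (e i).2⟩
        refine ⟨⟨fun i => ((e i : Finset (Fin k))), hpred⟩, ?_⟩
        apply Subtype.ext
        apply Finpartition.ext
        show image _ univ = P.1.parts
        exact himg
      · rintro ⟨⟨p, hp⟩, hx⟩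
        apply Subtype.ext; apply Subtype.ext
        funext i
        rfl
      · intro e
        apply Equiv.ext
        intro i
        apply Subtype.ext
        rfl
    rw [Nat.card_congr hfe, Nat.card_eq_fintype_card]
    have e0 : Fin n ≃ ↥(P.1.parts) :=
      Fintype.equivOfCardEq (by simp [Fintype.card_coe, P.2.1])
    rw [Fintype.card_equiv e0, Fintype.card_fin]
  rw [h1]
  simp only [h2]
  rw [Finset.sum_const, card_univ, smul_eq_mul, mul_comm]
  congr 1
  rw [E, Nat.card_eq_fintype_card]

lemma cardA_eq_sum (σ n k : ℕ) :
    Nat.card {p : Fin n → Finset (Fin k) // PredA σ n k p}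
      = ∑ f ∈ (Fintype.piFinset fun _ : Fin n => Icc 1 (σ + 1)).filter
          (fun f => ∑ i, f i = k), Nat.multinomial univ f := by
  classical
  set T := {p : Fin n → Finset (Fin k) // PredA σ n k p} with hT
  set S := (Fintype.piFinset fun _ : Fin n => Icc 1 (σ + 1)).filter
    (fun f => ∑ i, f i = k) with hS
  have hmem : ∀ x : T, (fun i => (x.1 i).card) ∈ S := by
    intro ⟨p, hp⟩
    obtain hp := hp
    rw [hS, mem_filter, Fintype.mem_piFinset]
    refine ⟨fun i => mem_Icc.2 (hp.2.2 i), ?_⟩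
    have hbu := card_biUnion (s := (univ : Finset (Fin n))) (t := p)
      (fun i _ j _ hij => hp.1 i j hij)
    rw [← sup_eq_biUnion, hp.2.1] at hbu
    simpa using hbu.symm
  let g : T → ↥S := fun x => ⟨fun i => (x.1 i).card, hmem x⟩
  have h1 : Nat.card T = ∑ fb : ↥S, Nat.card {x : T // g x = fb} := by
    rw [← nat_card_sigma']
    exact (Nat.card_congr (Equiv.sigmaFiberEquiv g)).symm
  have h2 : ∀ fb : ↥S, Nat.card {x : T // g x = fb} = Nat.multinomial univ fb.1 := by
    rintro ⟨f, hf⟩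
    rw [hS, mem_filter, Fintype.mem_piFinset] at hf
    have hcast : ∑ i ∈ (univ : Finset (Fin n)), f i = (univ : Finset (Fin k)).card := by
      simpa using hf.2
    rw [← card_tuples univ f univ hcast]
    apply Nat.card_congr
    refine ⟨fun x => ⟨x.1.1, ?_, ?_, ?_, ?_⟩, fun q => ⟨⟨q.1, ?_⟩, ?_⟩, ?_, ?_⟩
    · intro i _ j _ hij
      exact x.1.2.1 i j hij
    · exact x.1.2.2.1
    · intro i _
      exact congrFun (congrArg Subtype.val x.2) i
    · intro i hi
      exact absurd (mem_univ i) hi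
    · refine ⟨fun i j hij => q.2.1 i (mem_univ i) j (mem_univ j) hij, q.2.2.1, fun i => ?_⟩
      rw [q.2.2.2.1 i (mem_univ i)]
      exact mem_Icc.1 (hf.1 i)
    · exact Subtype.ext (funext fun i => q.2.2.2.1 i (mem_univ i))
    · intro x
      apply Subtype.ext; apply Subtype.ext; rfl
    · intro q
      apply Subtype.ext; rfl
  rw [h1]
  rw [Finset.sum_congr rfl fun fb _ => h2 fb]
  exact Finset.sum_coe_sort S (fun f => Nat.multinomial univ f)

lemma key_sum (σ n : ℕ) :
    n.factorial * (∑ k ∈ Icc n ((σ + 1) * n), E σ n k)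
      = ∑ f ∈ Fintype.piFinset (fun _ : Fin n => Icc 1 (σ + 1)),
          Nat.multinomial univ f := by
  classical
  rw [Finset.mul_sum]
  rw [Finset.sum_congr rfl fun k _ => by rw [← cardA σ n k, cardA_eq_sum σ n k]]
  refine Finset.sum_fiberwise_of_maps_to ?_ _
  intro f hf
  rw [Fintype.mem_piFinset] at hf
  rw [mem_Icc]
  constructor
  · calc n = (univ : Finset (Fin n)).card • 1 := by simp
    _ ≤ ∑ i, f i := Finset.card_nsmul_le_sum _ _ _ (fun i _ => (mem_Icc.1 (hf i)).1)
  · calc ∑ i, f i ≤ (univ : Finset (Fin n)).card • (σ + 1) :=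
      Finset.sum_le_card_nsmul _ _ _ (fun i _ => (mem_Icc.1 (hf i)).2)
    _ = (σ + 1) * n := by simp [mul_comm]

open MeasureTheory in
lemma integrableOn_exp_pow (m : ℕ) :
    IntegrableOn (fun y : ℝ => Real.exp (-y) * y ^ m) (Set.Ioi 0) := by
  have h := Real.GammaIntegral_convergent (s := m + 1) (by positivity)
  refine h.congr_fun ?_ measurableSet_Ioi
  intro x hx
  rw [show ((m : ℝ) + 1 - 1) = (m : ℝ) by ring]
  simp [Real.rpow_natCast]

open MeasureTheory in
lemma integral_exp_pow (m : ℕ) :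
    ∫ y in Set.Ioi (0 : ℝ), Real.exp (-y) * y ^ m = (m.factorial : ℝ) := by
  rw [← Real.Gamma_nat_eq_factorial,
    Real.Gamma_eq_integral (by positivity : (0 : ℝ) < m + 1)]
  refine setIntegral_congr_fun measurableSet_Ioi ?_
  intro x hx
  rw [show ((m : ℝ) + 1 - 1) = (m : ℝ) by ring]
  simp [Real.rpow_natCast]


open MeasureTheory in
theorem stmt_5 (σ n : ℕ) (hσ : 1 ≤ σ) :
    (G σ n : ℝ) = (1 / n.factorial : ℝ) *
      ∫ y in Set.Ioi (0 : ℝ),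
        Real.exp (-y) * (∑ j ∈ Finset.Icc 1 (σ + 1), y ^ j / j.factorial) ^ n := by
  classical
  have key_sum' : n.factorial * G σ n
      = ∑ f ∈ Fintype.piFinset (fun _ : Fin n => Icc 1 (σ + 1)),
          Nat.multinomial univ f := by
    rw [G]; exact key_sum σ n
  have hexp : ∀ y : ℝ, Real.exp (-y) * (∑ j ∈ Finset.Icc 1 (σ + 1), y ^ j / j.factorial) ^ n
      = ∑ f ∈ Fintype.piFinset (fun _ : Fin n => Icc 1 (σ + 1)),
          (∏ i, ((f i).factorial : ℝ))⁻¹ * (Real.exp (-y) * y ^ (∑ i, f i)) := by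
    intro y
    rw [Finset.sum_pow', Finset.mul_sum]
    refine Finset.sum_congr rfl fun f hf => ?_
    rw [Finset.prod_div_distrib, Finset.prod_pow_eq_pow_sum]
    field_simp
    try ring
  have hint : ∫ y in Set.Ioi (0 : ℝ),
      Real.exp (-y) * (∑ j ∈ Finset.Icc 1 (σ + 1), y ^ j / j.factorial) ^ n
      = ∑ f ∈ Fintype.piFinset (fun _ : Fin n => Icc 1 (σ + 1)),
          (∏ i, ((f i).factorial : ℝ))⁻¹ * ((∑ i, f i).factorial : ℝ) := by
    simp only [hexp]
    rw [integral_finset_sum _ (fun f _ => ((integrableOn_exp_pow _).const_mul _))]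
    refine Finset.sum_congr rfl fun f hf => ?_
    rw [integral_const_mul, integral_exp_pow]
  have hmult : ∀ f : Fin n → ℕ,
      (∏ i, ((f i).factorial : ℝ))⁻¹ * ((∑ i, f i).factorial : ℝ)
        = (Nat.multinomial univ f : ℝ) := by
    intro f
    have hs := Nat.multinomial_spec (univ : Finset (Fin n)) f
    have h0 : (∏ i, ((f i).factorial : ℝ)) ≠ 0 := by positivity
    rw [inv_mul_eq_div, div_eq_iff h0]
    rw [← Nat.cast_prod, ← Nat.cast_mul, mul_comm]
    exact_mod_cast hs.symm
  rw [hint, Finset.sum_congr rfl fun f _ => hmult f]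
  have hk : (∑ f ∈ Fintype.piFinset (fun _ : Fin n => Icc 1 (σ + 1)),
      (Nat.multinomial univ f : ℝ))
      = (n.factorial : ℝ) * (G σ n : ℝ) := by
    exact_mod_cast congrArg (Nat.cast : ℕ → ℝ) key_sum'.symm
  rw [hk, ← mul_assoc, one_div,
    inv_mul_cancel₀ (by positivity : (n.factorial : ℝ) ≠ 0), one_mul]
end

section
/- For n ≥ 0, G_1(n) = Σ_{i=0}^{n} (n+i)! / ((n-i)! · i! · 2^i). -/
open Finset
open Finset
variable {α : Type*} [DecidableEq α]
def matchSet (s : Finset α) (i : ℕ) : Finset (Finset (Finset α)) :=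
  (s.powerset.filter (fun p => p.card = 2)).powerset.filter
    (fun S => S.card = i ∧ ∀ p ∈ S, ∀ q ∈ S, p ≠ q → Disjoint p q)
lemma mem_matchSet {s : Finset α} {i : ℕ} {S : Finset (Finset α)} :
    S ∈ matchSet s i ↔ (∀ p ∈ S, p ⊆ s ∧ p.card = 2) ∧ S.card = i ∧
      ∀ p ∈ S, ∀ q ∈ S, p ≠ q → Disjoint p q := by
  simp only [matchSet, mem_filter, mem_powerset, subset_iff]
lemma matchSet_zero (s : Finset α) : matchSet s 0 = {∅} := by
  ext S
  simp only [mem_matchSet, Finset.card_eq_zero, mem_singleton]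
  constructor
  · rintro ⟨-, h, -⟩; exact h
  · rintro rfl; simp
lemma matchSet_insert {a : α} {s : Finset α} (ha : a ∉ s) (i : ℕ) :
    matchSet (insert a s) (i+1) = matchSet s (i+1) ∪
      s.biUnion (fun b => (matchSet (s.erase b) i).image (insert ({a,b} : Finset α))) := by
  ext S
  simp only [mem_union, mem_biUnion, mem_image]
  constructor
  · intro hS
    rw [mem_matchSet] at hS
    obtain ⟨h1, h2, h3⟩ := hS
    by_cases hc : ∀ p ∈ S, a ∉ p
    · left
      rw [mem_matchSet]
      refine ⟨fun p hp => ⟨?_, (h1 p hp).2⟩, h2, h3⟩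
      intro x hx
      have := (h1 p hp).1 hx
      rcases mem_insert.mp this with rfl | h
      · exact absurd hx (hc p hp)
      · exact h
    · right
      push_neg at hc
      obtain ⟨p, hp, hap⟩ := hc
      obtain ⟨x, y, hxy, rfl⟩ := Finset.card_eq_two.mp (h1 p hp).2
      -- wlog a = x
      obtain ⟨b, hb, hpab⟩ : ∃ b, b ≠ a ∧ ({x, y} : Finset α) = {a, b} := by
        rcases mem_insert.mp hap with rfl | h
        · exact ⟨y, fun h => hxy h.symm, rfl⟩
        · rw [mem_singleton] at h
          subst h
          exact ⟨x, hxy, Finset.pair_comm x a⟩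
      rw [hpab] at hp
      have hbs : b ∈ s := by
        have := (h1 _ hp).1 (by simp : b ∈ ({a,b}:Finset α))
        rcases mem_insert.mp this with rfl | h
        · exact absurd rfl hb
        · exact h
      refine ⟨b, hbs, S.erase {a,b}, ?_, ?_⟩
      · rw [mem_matchSet]
        refine ⟨?_, ?_, ?_⟩
        · intro q hq
          have hqS := Finset.mem_of_mem_erase hq
          have hqne : q ≠ {a,b} := Finset.ne_of_mem_erase hq
          have hdisj := h3 q hqS _ hp (hqne)
          refine ⟨?_, (h1 q hqS).2⟩
          intro x hx
          have hxin := (h1 q hqS).1 hx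
          have hxa : x ≠ a := fun h => (Finset.disjoint_left.mp hdisj hx) (h ▸ by simp)
          have hxb : x ≠ b := fun h => (Finset.disjoint_left.mp hdisj hx) (h ▸ by simp)
          rcases mem_insert.mp hxin with rfl | h
          · exact absurd rfl hxa
          · exact mem_erase.mpr ⟨hxb, h⟩
        · rw [Finset.card_erase_of_mem hp, h2]; omega
        · intro p hp' q hq' hne
          exact h3 p (Finset.mem_of_mem_erase hp') q (Finset.mem_of_mem_erase hq') hne
      · exact Finset.insert_erase hp
  · rintro (hS | ⟨b, hbs, S', hS', rfl⟩)
    · rw [mem_matchSet] at hS ⊢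
      exact ⟨fun p hp => ⟨(hS.1 p hp).1.trans (subset_insert a s), (hS.1 p hp).2⟩, hS.2⟩
    · rw [mem_matchSet] at hS' ⊢
      obtain ⟨h1, h2, h3⟩ := hS'
      have hab : a ≠ b := fun h => ha (h ▸ hbs)
      have haq : ∀ q ∈ S', a ∉ q := fun q hq h =>
        ha (Finset.mem_of_mem_erase ((h1 q hq).1 h))
      have hbq : ∀ q ∈ S', b ∉ q := fun q hq h =>
        Finset.notMem_erase b s ((h1 q hq).1 h)
      have habS' : ({a,b} : Finset α) ∉ S' := fun h => haq _ h (by simp)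
      refine ⟨?_, ?_, ?_⟩
      · intro p hp
        rcases mem_insert.mp hp with rfl | h
        · refine ⟨?_, Finset.card_pair hab⟩
          intro x hx
          rcases mem_insert.mp hx with rfl | h
          · exact mem_insert_self x s
          · rw [mem_singleton] at h; subst h; exact mem_insert_of_mem hbs
        · exact ⟨((h1 p h).1.trans (Finset.erase_subset b s)).trans (subset_insert a s),
            (h1 p h).2⟩
      · rw [Finset.card_insert_of_notMem habS', h2]
      · intro p hp q hq hne
        rcases mem_insert.mp hp with rfl | hp' <;> rcases mem_insert.mp hq with rfl | hq'
        · exact absurd rfl hne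
        · rw [Finset.disjoint_left]
          intro x hx
          rcases mem_insert.mp hx with rfl | h
          · exact haq q hq'
          · rw [mem_singleton] at h; subst h; exact hbq q hq'
        · rw [Finset.disjoint_right]
          intro x hx
          rcases mem_insert.mp hx with rfl | h
          · exact haq p hp'
          · rw [mem_singleton] at h; subst h; exact hbq p hp'
        · exact h3 p hp' q hq' hne

lemma two_mul_le_of_mem_matchSet {s : Finset α} {i : ℕ} {S : Finset (Finset α)}
    (hS : S ∈ matchSet s i) : 2 * i ≤ s.card := by
  rw [mem_matchSet] at hS
  obtain ⟨h1, h2, h3⟩ := hS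
  have hsub : S.biUnion id ⊆ s := by
    intro x hx
    obtain ⟨p, hp, hxp⟩ := Finset.mem_biUnion.mp hx
    exact (h1 p hp).1 hxp
  have hcard : (S.biUnion id).card = ∑ p ∈ S, p.card := Finset.card_biUnion h3
  have : ∑ p ∈ S, p.card = 2 * i := by
    rw [Finset.sum_congr rfl (fun p hp => (h1 p hp).2), Finset.sum_const, h2, smul_eq_mul,
      Nat.mul_comm]
  calc 2 * i = (S.biUnion id).card := by rw [hcard, this]
    _ ≤ s.card := Finset.card_le_card hsub

lemma matchSet_eq_empty {s : Finset α} {i : ℕ} (h : s.card < 2 * i) : matchSet s i = ∅ := by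
  rw [Finset.eq_empty_iff_forall_notMem]
  intro S hS
  exact absurd (two_mul_le_of_mem_matchSet hS) (by omega)

lemma card_matchSet_insert {a : α} {s : Finset α} (ha : a ∉ s) (i : ℕ) :
    (matchSet (insert a s) (i+1)).card =
      (matchSet s (i+1)).card + ∑ b ∈ s, (matchSet (s.erase b) i).card := by
  rw [matchSet_insert ha i, Finset.card_union_of_disjoint, Finset.card_biUnion]
  · congr 1
    refine Finset.sum_congr rfl fun b hb => ?_
    apply Finset.card_image_of_injOn
    intro S hS T hT hST
    have haS : ({a,b} : Finset α) ∉ S := fun h => by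
      have := ((mem_matchSet.mp hS).1 _ h).1 (by simp : a ∈ ({a,b}:Finset α))
      exact ha (Finset.mem_of_mem_erase this)
    have haT : ({a,b} : Finset α) ∉ T := fun h => by
      have := ((mem_matchSet.mp hT).1 _ h).1 (by simp : a ∈ ({a,b}:Finset α))
      exact ha (Finset.mem_of_mem_erase this)
    have := congrArg (fun X => Finset.erase X ({a,b} : Finset α)) hST
    simpa [Finset.erase_insert haS, Finset.erase_insert haT] using this
  · -- images pairwise disjoint
    intro b hb b' hb' hne
    simp only [Function.onFun]; rw [Finset.disjoint_left]
    rintro T hT hT'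
    obtain ⟨S, hS, rfl⟩ := Finset.mem_image.mp hT
    obtain ⟨S', hS', heq⟩ := Finset.mem_image.mp hT'
    have hmem : ({a,b} : Finset α) ∈ insert ({a,b'} : Finset α) S' := by
      rw [heq]; exact Finset.mem_insert_self _ _
    rcases Finset.mem_insert.mp hmem with h | h
    · have : b ∈ ({a, b'} : Finset α) := h ▸ (by simp : b ∈ ({a,b}:Finset α))
      rcases Finset.mem_insert.mp this with rfl | hbb
      · exact ha hb
      · exact hne (Finset.mem_singleton.mp hbb)
    · have := ((mem_matchSet.mp hS').1 _ h).1 (by simp : a ∈ ({a,b}:Finset α))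
      exact ha (Finset.mem_of_mem_erase this)
  · -- disjoint matchSet s (i+1) vs biUnion
    rw [Finset.disjoint_left]
    rintro T hT hT'
    obtain ⟨b, hb, hTb⟩ := Finset.mem_biUnion.mp hT'
    obtain ⟨S, hS, rfl⟩ := Finset.mem_image.mp hTb
    have := ((mem_matchSet.mp hT).1 _ (Finset.mem_insert_self _ _)).1
      (by simp : a ∈ ({a,b}:Finset α))
    exact ha this

lemma key1_s9 (j i : ℕ) : ((j+2*i+3).factorial : ℚ) / ((j+1).factorial * (i+1).factorial * 2^(i+1))
    = (j+2*i+2).factorial / (j.factorial * (i+1).factorial * 2^(i+1))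
      + (j+2*i+2) * ((j+2*i+1).factorial / ((j+1).factorial * i.factorial * 2^i)) := by
  rw [show j+2*i+3 = (j+2*i+2)+1 by omega, Nat.factorial_succ,
    show j+2*i+2 = (j+2*i+1)+1 by omega, Nat.factorial_succ (j+2*i+1),
    Nat.factorial_succ j, Nat.factorial_succ i]
  have h1 : (j.factorial : ℚ) ≠ 0 := Nat.cast_ne_zero.mpr (Nat.factorial_ne_zero j)
  have h2 : (i.factorial : ℚ) ≠ 0 := Nat.cast_ne_zero.mpr (Nat.factorial_ne_zero i)
  have h3 : ((j+2*i+1).factorial : ℚ) ≠ 0 := Nat.cast_ne_zero.mpr (Nat.factorial_ne_zero _)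
  have h4 : ((j:ℚ)+1) ≠ 0 := by positivity
  have h5 : ((i:ℚ)+1) ≠ 0 := by positivity
  have h6 : (2:ℚ)^i ≠ 0 := by positivity
  push_cast
  field_simp
  ring

lemma key2_s9 (i : ℕ) : ((2*i+2).factorial : ℚ) / ((i+1).factorial * 2^(i+1))
    = (2*i+1) * ((2*i).factorial / (i.factorial * 2^i)) := by
  rw [show 2*i+2 = (2*i+1)+1 by omega, Nat.factorial_succ,
    Nat.factorial_succ (2*i), Nat.factorial_succ i]
  have h2 : (i.factorial : ℚ) ≠ 0 := Nat.cast_ne_zero.mpr (Nat.factorial_ne_zero i)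
  have h3 : (((2*i)).factorial : ℚ) ≠ 0 := Nat.cast_ne_zero.mpr (Nat.factorial_ne_zero _)
  have h5 : ((i:ℚ)+1) ≠ 0 := by positivity
  have h6 : (2:ℚ)^i ≠ 0 := by positivity
  push_cast
  field_simp
  ring

lemma card_matchSet : ∀ n : ℕ, ∀ (s : Finset α), s.card = n → ∀ i, 2*i ≤ n →
    ((matchSet s i).card : ℚ) = n.factorial / ((n-2*i).factorial * i.factorial * 2^i) := by
  intro n
  induction n using Nat.strong_induction_on with
  | _ n IH =>
    intro s hs i hi
    match i with
    | 0 =>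
      rw [matchSet_zero]
      simp [Nat.factorial_ne_zero]
    | i+1 =>
      have hn2 : 2 ≤ n := by omega
      obtain ⟨a, ha⟩ := Finset.card_pos.mp (by omega : 0 < s.card)
      have hins : s = insert a (s.erase a) := (Finset.insert_erase ha).symm
      have hnotmem : a ∉ s.erase a := Finset.notMem_erase a s
      have hte : (s.erase a).card = n - 1 := by rw [Finset.card_erase_of_mem ha, hs]
      rw [hins, card_matchSet_insert hnotmem i]
      push_cast
      have hsum : ∀ b ∈ s.erase a, ((matchSet ((s.erase a).erase b) i).card : ℚ)
          = (n-2 : ℕ).factorial / (((n-2) - 2*i).factorial * i.factorial * 2^i) := by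
        intro b hb
        exact IH (n-2) (by omega) _ (by rw [Finset.card_erase_of_mem hb, hte]; omega) i (by omega)
      rw [Finset.sum_congr rfl hsum, Finset.sum_const, hte, nsmul_eq_mul]
      by_cases hcase : 2*(i+1) ≤ n-1
      · rw [IH (n-1) (by omega) _ hte (i+1) (by omega)]
        obtain ⟨j, rfl⟩ : ∃ j, n = j+2*i+3 := ⟨n-(2*i+3), by omega⟩
        rw [show (j+2*i+3) - 2*(i+1) = j+1 by omega, show (j+2*i+3) - 1 = j+2*i+2 by omega,
          show (j+2*i+2) - 2*(i+1) = j by omega, show (j+2*i+3) - 2 = j+2*i+1 by omega,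
          show (j+2*i+1) - 2*i = j+1 by omega]
        have hk := key1_s9 j i
        push_cast at hk ⊢
        linear_combination -hk
      · have hn : n = 2*i+2 := by omega
        subst hn
        rw [matchSet_eq_empty (by rw [hte]; omega)]
        rw [show (2*i+2) - 2*(i+1) = 0 by omega, show (2*i+2) - 2 = 2*i by omega,
          show (2*i) - 2*i = 0 by omega, show (2*i+2) - 1 = 2*i+1 by omega, Nat.factorial_zero]
        have hk := key2_s9 i
        push_cast at hk ⊢
        simp only [Finset.card_empty]
        push_cast
        linear_combination -hk

section
variable {k : ℕ}

def ofMatch (S : Finset (Finset (Fin k)))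
    (h2 : ∀ p ∈ S, p.card = 2)
    (hdisj : ∀ p ∈ S, ∀ q ∈ S, p ≠ q → Disjoint p q) :
    Finpartition (univ : Finset (Fin k)) where
  parts := S ∪ (univ \ S.biUnion id).image (fun x => {x})
  supIndep := by
    rw [Finset.supIndep_iff_pairwiseDisjoint]
    intro p hp q hq hne
    simp only [coe_union, Set.mem_union, mem_coe, mem_image, mem_sdiff, mem_univ, true_and,
      Finset.mem_biUnion, id] at hp hq
    rcases hp with hp | ⟨x, hx, rfl⟩ <;> rcases hq with hq | ⟨y, hy, rfl⟩
    · exact hdisj p hp q hq hne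
    · exact Finset.disjoint_singleton_right.mpr (fun h => hy ⟨p, hp, h⟩)
    · exact Finset.disjoint_singleton_left.mpr (fun h => hx ⟨q, hq, h⟩)
    · exact Finset.disjoint_singleton_left.mpr (fun h =>
        hne (by rw [Finset.mem_singleton.mp h]))
  sup_parts := by
    ext x
    simp only [Finset.mem_sup, mem_union, mem_image, mem_sdiff, mem_univ, true_and,
      Finset.mem_biUnion, id, mem_univ, iff_true]
    by_cases hx : ∃ p ∈ S, x ∈ p
    · obtain ⟨p, hp, hxp⟩ := hx
      exact ⟨p, Or.inl hp, hxp⟩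
    · exact ⟨{x}, Or.inr ⟨x, hx, rfl⟩, Finset.mem_singleton_self x⟩
  bot_notMem := by
    simp only [bot_eq_empty, mem_union, mem_image, mem_sdiff, mem_univ, true_and]
    rintro (h | ⟨x, -, h⟩)
    · have := h2 _ h; simp at this
    · exact Finset.singleton_ne_empty x h

lemma ofMatch_parts (S : Finset (Finset (Fin k))) (h2 : ∀ p ∈ S, p.card = 2)
    (hdisj : ∀ p ∈ S, ∀ q ∈ S, p ≠ q → Disjoint p q) :
    (ofMatch S h2 hdisj).parts = S ∪ (univ \ S.biUnion id).image (fun x => {x}) := rfl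

lemma part_card_one_or_two {P : Finpartition (univ : Finset (Fin k))}
    (hsize : ∀ p ∈ P.parts, p.card ≤ 2) {p} (hp : p ∈ P.parts) : p.card = 1 ∨ p.card = 2 := by
  have h1 := Finset.card_pos.mpr (P.nonempty_of_mem_parts hp)
  have h2 := hsize p hp
  omega

lemma filter_two_card {n : ℕ} {P : Finpartition (univ : Finset (Fin k))}
    (hn : P.parts.card = n) (hsize : ∀ p ∈ P.parts, p.card ≤ 2) :
    (P.parts.filter (fun p => p.card = 2)).card = k - n ∧ n ≤ k ∧ k ≤ 2 * n := by
  classical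
  set S := P.parts.filter (fun p => p.card = 2) with hS
  set T := P.parts.filter (fun p => ¬ p.card = 2) with hT
  have hST : S.card + T.card = n := by
    rw [hS, hT, Finset.card_filter_add_card_filter_not, hn]
  have hsumS : ∑ p ∈ S, p.card = 2 * S.card := by
    rw [Finset.sum_congr rfl (fun p hp => (Finset.mem_filter.mp hp).2), Finset.sum_const,
      smul_eq_mul, Nat.mul_comm]
  have hsumT : ∑ p ∈ T, p.card = T.card := by
    rw [Finset.sum_congr rfl (fun p hp => ?_), Finset.sum_const, smul_eq_mul, Nat.mul_one]
    have := part_card_one_or_two hsize (Finset.mem_filter.mp hp).1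
    have := (Finset.mem_filter.mp hp).2
    omega
  have hk : 2 * S.card + T.card = k := by
    have hall := P.sum_card_parts
    rw [Finset.card_univ, Fintype.card_fin] at hall
    have hsplit := Finset.sum_filter_add_sum_filter_not P.parts (fun p => p.card = 2)
      (fun p => p.card)
    rw [← hS, ← hT, hsumS, hsumT] at hsplit
    omega
  omega

lemma E_eq {n : ℕ} (hkn : n ≤ k) :
    E 1 n k = (matchSet (univ : Finset (Fin k)) (k - n)).card := by
  classical
  rw [E, ← Nat.card_eq_finsetCard]
  apply Nat.card_congr
  refine
    { toFun := fun P => ⟨P.1.parts.filter (fun p => p.card = 2), ?_⟩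
      invFun := fun S => ⟨ofMatch S.1
        (fun p hp => ((mem_matchSet.mp S.2).1 p hp).2)
        (fun p hp q hq h => (mem_matchSet.mp S.2).2.2 p hp q hq h), ?_, ?_⟩
      left_inv := ?_
      right_inv := ?_ }
  · -- forward membership
    obtain ⟨hn, hsize⟩ := P.2
    rw [mem_matchSet]
    refine ⟨fun p hp => ⟨Finset.subset_univ p, (Finset.mem_filter.mp hp).2⟩,
      (filter_two_card hn hsize).1, fun p hp q hq h =>
        P.1.disjoint (Finset.mem_filter.mp hp).1 (Finset.mem_filter.mp hq).1 h⟩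
  · -- parts card = n
    obtain ⟨h1, h2, h3⟩ := mem_matchSet.mp S.2
    rw [ofMatch_parts]
    have hdisjU : Disjoint S.1 ((univ \ S.1.biUnion id).image (fun x => ({x} : Finset (Fin k)))) := by
      rw [Finset.disjoint_left]
      rintro p hp hp'
      obtain ⟨x, -, rfl⟩ := Finset.mem_image.mp hp'
      have := (h1 _ hp).2
      simp at this
    have hB : ((S.1).biUnion id).card = 2 * (k - n) := by
      rw [Finset.card_biUnion (t := id) (fun p hp q hq h => h3 p hp q hq h)]
      calc ∑ p ∈ S.1, (id p).card = ∑ p ∈ S.1, 2 :=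
            Finset.sum_congr rfl (fun p hp => (h1 p hp).2)
        _ = 2 * (k - n) := by rw [Finset.sum_const, smul_eq_mul, Nat.mul_comm, h2]
    rw [Finset.card_union_of_disjoint hdisjU,
      Finset.card_image_of_injective _ (fun a b h => Finset.singleton_injective h),
      Finset.card_sdiff_of_subset (Finset.subset_univ _), Finset.card_univ, Fintype.card_fin, hB, h2]
    have hle : 2 * (k - n) ≤ k := by
      have := two_mul_le_of_mem_matchSet S.2
      rwa [Finset.card_univ, Fintype.card_fin] at this
    omega
  · -- sizes ≤ 2
    obtain ⟨h1, -, -⟩ := mem_matchSet.mp S.2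
    rw [ofMatch_parts]
    intro p hp
    rcases Finset.mem_union.mp hp with h | h
    · rw [(h1 p h).2]
    · obtain ⟨x, -, rfl⟩ := Finset.mem_image.mp h
      simp
  · -- left inverse
    rintro ⟨P, hn, hsize⟩
    ext : 1
    apply Finpartition.ext
    rw [ofMatch_parts]
    ext p
    constructor
    · intro hp
      rcases Finset.mem_union.mp hp with h | h
      · exact (Finset.mem_filter.mp h).1
      · obtain ⟨x, hx, rfl⟩ := Finset.mem_image.mp h
        have hx' : x ∉ (P.parts.filter (fun p => p.card = 2)).biUnion id :=
          (Finset.mem_sdiff.mp hx).2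
        obtain ⟨q, hq, hxq⟩ := P.exists_mem (mem_univ x)
        rcases part_card_one_or_two hsize hq with h1 | h2
        · obtain ⟨y, rfl⟩ := Finset.card_eq_one.mp h1
          obtain rfl := Finset.mem_singleton.mp hxq
          exact hq
        · exact absurd (Finset.mem_biUnion.mpr ⟨q, Finset.mem_filter.mpr ⟨hq, h2⟩, hxq⟩) hx'
    · intro hp
      rcases part_card_one_or_two hsize hp with h1 | h2
      · obtain ⟨x, rfl⟩ := Finset.card_eq_one.mp h1
        refine Finset.mem_union_right _
          (Finset.mem_image.mpr ⟨x, Finset.mem_sdiff.mpr ⟨mem_univ x, ?_⟩, rfl⟩)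
        intro hx
        obtain ⟨q, hq, hxq⟩ := Finset.mem_biUnion.mp hx
        have hq' := Finset.mem_filter.mp hq
        have hne : q ≠ {x} := by
          intro h; rw [h] at hq'; simp at hq'
        exact (Finset.disjoint_left.mp (P.disjoint hq'.1 hp hne) hxq)
          (Finset.mem_singleton_self x)
      · exact Finset.mem_union_left _ (Finset.mem_filter.mpr ⟨hp, h2⟩)
  · -- right inverse
    rintro ⟨S, hS⟩
    obtain ⟨h1, -, -⟩ := mem_matchSet.mp hS
    ext : 1
    simp only
    rw [ofMatch_parts]
    ext p
    simp only [mem_filter, mem_union, mem_image, mem_sdiff, mem_univ, true_and]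
    constructor
    · rintro ⟨h | ⟨x, -, rfl⟩, hc⟩
      · exact h
      · simp at hc
    · intro hp
      exact ⟨Or.inl hp, (h1 p hp).2⟩

end

theorem stmt_9 (n : ℕ) :
    (G 1 n : ℚ) = ∑ i ∈ Finset.range (n + 1),
      ((n + i).factorial : ℚ) / ((n - i).factorial * i.factorial * 2 ^ i) := by
  rw [G]
  push_cast
  have himg : Finset.Icc n ((1 + 1) * n) = (Finset.range (n + 1)).image (fun i => n + i) := by
    ext x
    simp only [Finset.mem_Icc, Finset.mem_image, Finset.mem_range]
    constructor
    · rintro ⟨h1, h2⟩; exact ⟨x - n, by omega, by omega⟩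
    · rintro ⟨i, hi, rfl⟩; omega
  rw [himg, Finset.sum_image (by intro a _ b _ hab; simp only at hab; omega)]
  refine Finset.sum_congr rfl fun i hi => ?_
  have hin : i ≤ n := by simpa using Nat.lt_succ_iff.mp (Finset.mem_range.mp hi)
  rw [E_eq (by omega : n ≤ n + i), show n + i - n = i by omega,
    card_matchSet (n + i) Finset.univ (by simp) i (by omega),
    show n + i - 2 * i = n - i by omega]
end

section
/- For n ≥ 2, G_1(n) = (2n-1) · G_1(n-1) + G_1(n-2), with G_1(0) = 1 and G_1(1) = 2. -/
open Finset

def dd (i : ℕ) : ℕ := ∏ t ∈ Finset.range i, (2 * t + 1)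

def mm (k j : ℕ) : ℕ := k.choose (2 * j) * dd j

lemma dd_succ (i : ℕ) : dd (i + 1) = dd i * (2 * i + 1) := prod_range_succ _ _

lemma mm_zero (k : ℕ) : mm k 0 = 1 := by simp [mm, dd]

lemma mm_of_lt {k j : ℕ} (h : k < 2 * j) : mm k j = 0 := by
  simp [mm, Nat.choose_eq_zero_of_lt h]

lemma mm_succ_succ (k j : ℕ) : mm (k + 1) (j + 1) = mm k (j + 1) + k * mm (k - 1) j := by
  cases k with
  | zero =>
    rw [mm_of_lt (by omega), mm_of_lt (by omega)]; simp
  | succ k =>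
    have h1 : (k + 2).choose (2 * j + 2) = (k + 1).choose (2 * j + 1) + (k + 1).choose (2 * j + 2) :=
      Nat.choose_succ_succ (k + 1) (2 * j + 1)
    have h2 : (k + 1) * Nat.choose k (2 * j) = (k + 1).choose (2 * j + 1) * (2 * j + 1) :=
      Nat.add_one_mul_choose_eq k (2 * j)
    simp only [mm, dd_succ, Nat.add_sub_cancel, show 2 * (j + 1) = 2 * j + 2 by ring]
    zify at h1 h2 ⊢
    linear_combination ((dd j : ℤ) * (2 * j + 1)) * h1 - (dd j : ℤ) * h2

lemma mm_rec2 (n i : ℕ) (hi : i ≤ n + 1) :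
    mm (n + 2 + (i + 1)) (i + 1) = (2 * n + 3) * mm (n + 1 + i) i + mm (n + (i + 1)) (i + 1) := by
  set N := n + i + 1 with hN
  have e1 : n + 2 + (i + 1) = N + 2 := by omega
  have e2 : n + (i + 1) = N := by omega
  have e3 : n + 1 + i = N := by omega
  rw [e1, e2, e3]
  have pas : (N + 2).choose (2 * i + 2)
      = N.choose (2 * i) + 2 * N.choose (2 * i + 1) + N.choose (2 * i + 2) := by
    rw [show (N + 2).choose (2 * i + 2) = (N + 1).choose (2 * i + 1) + (N + 1).choose (2 * i + 2)
          from Nat.choose_succ_succ (N + 1) (2 * i + 1),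
        show (N + 1).choose (2 * i + 1) = N.choose (2 * i) + N.choose (2 * i + 1)
          from Nat.choose_succ_succ N (2 * i),
        show (N + 1).choose (2 * i + 2) = N.choose (2 * i + 1) + N.choose (2 * i + 2)
          from Nat.choose_succ_succ N (2 * i + 1)]
    ring
  set q := n + 1 - i with hq
  have key : N.choose (2 * i + 1) * (2 * i + 1) = N.choose (2 * i) * q := by
    have := Nat.choose_succ_right_eq N (2 * i)
    rwa [show N - 2 * i = q by omega] at this
  have hsub : 2 * q + (2 * i + 1) = 2 * n + 3 := by omega
  simp only [mm, dd_succ, show 2 * (i + 1) = 2 * i + 2 by ring]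
  zify at pas key hsub ⊢
  linear_combination ((dd i : ℤ) * (2 * i + 1)) * pas + 2 * (dd i : ℤ) * key
    + ((dd i : ℤ) * (N.choose (2 * i) : ℤ)) * hsub
section Matching
variable {α : Type*} [Fintype α] [DecidableEq α]

def MatchIn (s : Finset α) (j : ℕ) : Type _ :=
  {M : Finset (Finset α) // (∀ p ∈ M, p ⊆ s ∧ p.card = 2) ∧
    (M : Set (Finset α)).PairwiseDisjoint id ∧ M.card = j}

instance (s : Finset α) (j : ℕ) : Finite (MatchIn s j) := by
  unfold MatchIn; infer_instance

lemma matchIn_zero (s : Finset α) : Nat.card (MatchIn s 0) = 1 := by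
  have : Unique (MatchIn s 0) :=
    { default := ⟨∅, by simp, by simp, by simp⟩
      uniq := fun M => Subtype.ext (by simpa using card_eq_zero.mp M.2.2.2) }
  exact Nat.card_unique

lemma matchIn_empty (j : ℕ) : Nat.card (MatchIn (∅ : Finset α) (j + 1)) = 0 := by
  have : IsEmpty (MatchIn (∅ : Finset α) (j + 1)) := by
    constructor
    rintro ⟨M, h1, h2, h3⟩
    have hM : M.Nonempty := card_pos.mp (by omega)
    obtain ⟨p, hp⟩ := hM
    have h4 := (h1 p hp).1
    have h5 := (h1 p hp).2
    rw [subset_empty] at h4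
    rw [h4] at h5
    simp at h5
  exact Nat.card_of_isEmpty

lemma matchIn_succ_card (s : Finset α) (a : α) (ha : a ∈ s) (j : ℕ) :
    Nat.card (MatchIn s (j + 1)) = Nat.card (MatchIn (s.erase a) (j + 1))
      + ∑ b ∈ (s.erase a).attach, Nat.card (MatchIn ((s.erase a).erase b.1) j) := by
  classical
  set t := s.erase a with htdef
  have hat : a ∉ t := notMem_erase a s
  let ψ : (MatchIn t (j + 1) ⊕ (Σ b : {x // x ∈ t}, MatchIn (t.erase b.1) j)) → MatchIn s (j + 1) :=
    fun x => match x with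
    | Sum.inl ⟨M, hM⟩ =>
        ⟨M, fun p hp => ⟨(hM.1 p hp).1.trans (erase_subset a s), (hM.1 p hp).2⟩, hM.2.1, hM.2.2⟩
    | Sum.inr ⟨⟨b, hb⟩, ⟨M, hM⟩⟩ =>
        ⟨insert {a, b} M, by
          have hbne : b ≠ a := (mem_erase.mp hb).1
          have hbs : b ∈ s := (mem_erase.mp hb).2
          have hnoa : ∀ q ∈ M, a ∉ q := by
            intro q hq haq
            exact hat (mem_of_mem_erase ((hM.1 q hq).1 haq))
          have hnob : ∀ q ∈ M, b ∉ q := by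
            intro q hq hbq
            exact (mem_erase.mp ((hM.1 q hq).1 hbq)).1 rfl
          have hpairnotmem : ({a, b} : Finset α) ∉ M := fun hmem =>
            hnoa _ hmem (mem_insert_self a {b})
          refine ⟨?_, ?_, ?_⟩
          · intro p hp
            rcases mem_insert.mp hp with rfl | hp
            · exact ⟨insert_subset ha (singleton_subset_iff.mpr hbs), card_pair (Ne.symm hbne)⟩
            · exact ⟨((hM.1 p hp).1.trans (erase_subset _ _)).trans (erase_subset a s),
                (hM.1 p hp).2⟩
          · rw [coe_insert]
            refine hM.2.1.insert ?_
            intro q hq _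
            rw [Finset.disjoint_left]
            intro x hx hxq
            rcases mem_insert.mp hx with rfl | hx
            · exact hnoa q hq hxq
            · rw [mem_singleton] at hx; subst hx; exact hnob q hq hxq
          · rw [card_insert_of_notMem hpairnotmem, hM.2.2]⟩
  have hbij : Function.Bijective ψ := by
    constructor
    · rintro (⟨M, hM⟩ | ⟨⟨b, hb⟩, ⟨M, hM⟩⟩) (⟨M', hM'⟩ | ⟨⟨b', hb'⟩, ⟨M', hM'⟩⟩) h
      · have hval : M = M' := congrArg Subtype.val h
        apply congrArg Sum.inl
        exact Subtype.ext hval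
      · exfalso
        have hval : M = insert {a, b'} M' := congrArg Subtype.val h
        have hmem : ({a, b'} : Finset α) ∈ M := by
          rw [hval]; exact mem_insert_self _ _
        exact hat ((hM.1 _ hmem).1 (mem_insert_self a {b'}))
      · exfalso
        have hval : insert {a, b} M = M' := congrArg Subtype.val h
        have hmem : ({a, b} : Finset α) ∈ M' := by
          rw [← hval]; exact mem_insert_self _ _
        exact hat ((hM'.1 _ hmem).1 (mem_insert_self a {b}))
      · have hval : insert {a, b} M = insert {a, b'} M' := congrArg Subtype.val h
        have hnoaM : ∀ q ∈ M, a ∉ q := fun q hq haq =>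
          hat (((hM.1 q hq).1.trans (erase_subset _ _)) haq)
        have hnoaM' : ∀ q ∈ M', a ∉ q := fun q hq haq =>
          hat (((hM'.1 q hq).1.trans (erase_subset _ _)) haq)
        have hpairM : ({a, b} : Finset α) ∉ M := fun hmem => hnoaM _ hmem (mem_insert_self _ _)
        have hpairM' : ({a, b'} : Finset α) ∉ M' := fun hmem => hnoaM' _ hmem (mem_insert_self _ _)
        have hpair : ({a, b} : Finset α) = {a, b'} := by
          have hmem : ({a, b} : Finset α) ∈ insert {a, b'} M' := by
            rw [← hval]; exact mem_insert_self _ _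
          rcases mem_insert.mp hmem with heq | hmem2
          · exact heq
          · exact absurd (mem_insert_self a {b}) (fun hc => hnoaM' _ hmem2 hc)
        have hbb : b = b' := by
          have hbmem : b ∈ ({a, b'} : Finset α) := hpair ▸ (mem_insert_of_mem (mem_singleton_self b))
          rcases mem_insert.mp hbmem with h' | h'
          · exact absurd h' (mem_erase.mp hb).1
          · exact mem_singleton.mp h'
        subst hbb
        have hMM : M = M' := by
          have e1 : (insert ({a, b} : Finset α) M).erase {a, b} = M := erase_insert hpairM
          have e2 : (insert ({a, b} : Finset α) M').erase {a, b} = M' := erase_insert hpairM'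
          rw [← e1, ← e2, hval, hpair]
        have : (⟨M, hM⟩ : MatchIn (t.erase ((⟨b, hb⟩ : {x // x ∈ t}) : α)) j)
            = ⟨M', hM'⟩ := Subtype.ext hMM
        rw [show (⟨⟨b, hb⟩, ⟨M, hM⟩⟩ : Σ b : {x // x ∈ t}, MatchIn (t.erase b.1) j)
            = ⟨⟨b, hb'⟩, ⟨M', hM'⟩⟩ from by rw [← this]]
    · rintro ⟨M, h1, h2, h3⟩
      by_cases hA : ∃ p ∈ M, a ∈ p
      · obtain ⟨p, hpM, hap⟩ := hA
        have hcard2 := (h1 p hpM).2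
        have hc1 : (p.erase a).card = 1 := by rw [card_erase_of_mem hap, hcard2]
        obtain ⟨b, hb⟩ := card_eq_one.mp hc1
        have hbmem : b ∈ p.erase a := hb ▸ mem_singleton_self b
        have hbne : b ≠ a := (mem_erase.mp hbmem).1
        have hbp : b ∈ p := mem_of_mem_erase hbmem
        have hpeq : p = {a, b} := by rw [← insert_erase hap, hb]
        have hbt : b ∈ t := mem_erase.mpr ⟨hbne, (h1 p hpM).1 hbp⟩
        have hprops : (∀ q ∈ M.erase p, q ⊆ t.erase b ∧ q.card = 2) ∧
            ((M.erase p : Set (Finset α)).PairwiseDisjoint id) ∧ (M.erase p).card = j := by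
          refine ⟨?_, h2.subset (coe_subset.mpr (erase_subset _ _)), ?_⟩
          · intro q hq
            have hqM : q ∈ M := mem_of_mem_erase hq
            have hqp : q ≠ p := (mem_erase.mp hq).1
            have hdisj : Disjoint q p := h2 hqM hpM hqp
            refine ⟨?_, (h1 q hqM).2⟩
            intro x hxq
            have hxs : x ∈ s := (h1 q hqM).1 hxq
            have hxp : x ∉ p := disjoint_left.mp hdisj hxq
            rw [hpeq] at hxp
            simp only [mem_insert, mem_singleton, not_or] at hxp
            exact mem_erase.mpr ⟨hxp.2, mem_erase.mpr ⟨hxp.1, hxs⟩⟩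
          · rw [card_erase_of_mem hpM, h3]; omega
        refine ⟨Sum.inr ⟨⟨b, hbt⟩, ⟨M.erase p, hprops⟩⟩, ?_⟩
        apply Subtype.ext
        show insert {a, b} (M.erase p) = M
        rw [← hpeq, insert_erase hpM]
      · push_neg at hA
        refine ⟨Sum.inl ⟨M, ⟨fun p hp => ⟨?_, (h1 p hp).2⟩, h2, h3⟩⟩, ?_⟩
        · exact subset_erase.mpr ⟨(h1 p hp).1, hA p hp⟩
        · apply Subtype.ext; rfl
  rw [Nat.card_congr (Equiv.ofBijective ψ hbij).symm, Nat.card_sum]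
  congr 1
  letI : ∀ b : {x // x ∈ t}, Fintype (MatchIn (t.erase b.1) j) := fun _ => Fintype.ofFinite _
  letI : Fintype (Σ b : {x // x ∈ t}, MatchIn (t.erase b.1) j) := inferInstance
  rw [Nat.card_eq_fintype_card, Fintype.card_sigma, ← univ_eq_attach]
  exact Finset.sum_congr rfl fun b _ => (Nat.card_eq_fintype_card).symm


lemma matchIn_card_eq (k : ℕ) : ∀ (s : Finset α), s.card = k → ∀ j, Nat.card (MatchIn s j) = mm k j := by
  induction k using Nat.strong_induction_on with
  | _ k IH =>
    intro s hs j
    cases j with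
    | zero => rw [matchIn_zero, mm_zero]
    | succ j =>
      rcases s.eq_empty_or_nonempty with rfl | ⟨a, ha⟩
      · rw [card_empty] at hs
        subst hs
        rw [matchIn_empty, mm_of_lt (by omega)]
      · have hk : 1 ≤ k := by rw [← hs]; exact card_pos.mpr ⟨a, ha⟩
        have hte : (s.erase a).card = k - 1 := by rw [card_erase_of_mem ha, hs]
        rw [matchIn_succ_card s a ha j, IH (k - 1) (by omega) _ hte]
        have hsum : ∀ b ∈ (s.erase a).attach,
            Nat.card (MatchIn ((s.erase a).erase b.1) j) = mm (k - 2) j := by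
          intro b _
          have hcb : ((s.erase a).erase b.1).card = k - 2 := by
            rw [card_erase_of_mem b.2, hte]; omega
          exact IH (k - 2) (by omega) _ hcb j
        rw [Finset.sum_congr rfl hsum, Finset.sum_const, card_attach, hte, smul_eq_mul]
        obtain ⟨k', rfl⟩ : ∃ k', k = k' + 1 := ⟨k - 1, by omega⟩
        rw [show k' + 1 - 1 = k' from rfl, show k' + 1 - 2 = k' - 1 from by omega]
        exact (mm_succ_succ k' j).symm

end Matching
section Partition
variable {α : Type*} [Fintype α] [DecidableEq α]

/-- The partition associated to a partial matching: the pairs of `M` together with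
singletons on the uncovered elements. -/
def matchingPartition (M : Finset (Finset α)) (h2 : ∀ p ∈ M, p.card = 2)
    (hdisj : (M : Set (Finset α)).PairwiseDisjoint id) :
    Finpartition (Finset.univ : Finset α) where
  parts := M ∪ (Finset.univ \ M.sup id).image (fun x => {x})
  supIndep := by
    rw [supIndep_iff_pairwiseDisjoint]
    intro p hp q hq hpq
    simp only [coe_union, Set.mem_union, mem_coe, mem_image, mem_sdiff, mem_univ,
      true_and] at hp hq
    rcases hp with hp | ⟨x, hx, rfl⟩ <;> rcases hq with hq | ⟨y, hy, rfl⟩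
    · exact hdisj hp hq hpq
    · refine Finset.disjoint_singleton_right.mpr fun hyp => hy (mem_sup.mpr ⟨p, hp, hyp⟩)
    · refine Finset.disjoint_singleton_left.mpr fun hxq => hx (mem_sup.mpr ⟨q, hq, hxq⟩)
    · refine Finset.disjoint_singleton_left.mpr fun hxy => hpq ?_
      have hxy' : x = y := by simpa using hxy
      rw [hxy']
  sup_parts := by
    apply le_antisymm
    · exact Finset.sup_le fun b _ => le_top
    · intro x _
      rw [mem_sup]
      by_cases hx : x ∈ M.sup id
      · obtain ⟨p, hp, hxp⟩ := mem_sup.mp hx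
        exact ⟨p, mem_union_left _ hp, hxp⟩
      · exact ⟨{x}, mem_union_right _ (mem_image.mpr ⟨x, mem_sdiff.mpr ⟨mem_univ x, hx⟩, rfl⟩),
          mem_singleton_self x⟩
  bot_notMem := by
    intro hmem
    rcases mem_union.mp hmem with hmem | hmem
    · have := h2 _ hmem; simp at this
    · obtain ⟨x, _, hx⟩ := mem_image.mp hmem
      exact (singleton_ne_empty x) hx

lemma card_sup_matching (M : Finset (Finset α)) (h2 : ∀ p ∈ M, p.card = 2)
    (hdisj : (M : Set (Finset α)).PairwiseDisjoint id) :
    (M.sup id).card = 2 * M.card := by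
  rw [Finset.sup_eq_biUnion, Finset.card_biUnion (fun p hp q hq hpq => hdisj hp hq hpq)]
  simp only [id_eq]
  rw [Finset.sum_congr rfl (fun p hp => h2 p hp), Finset.sum_const, smul_eq_mul]
  ring

/-- Counting partitions into blocks of size at most two equals counting matchings. -/
lemma partition_card_eq (n : ℕ) (hn : n ≤ Fintype.card α) :
    Nat.card {P : Finpartition (Finset.univ : Finset α) //
        P.parts.card = n ∧ ∀ p ∈ P.parts, p.card ≤ 2}
      = Nat.card (MatchIn (Finset.univ : Finset α) (Fintype.card α - n)) := by
  classical
  set k := Fintype.card α with hk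
  apply Nat.card_congr
  have filter_card : ∀ (P : Finpartition (Finset.univ : Finset α)), P.parts.card = n →
      (∀ p ∈ P.parts, p.card ≤ 2) → ({p ∈ P.parts | p.card = 2}).card = k - n := by
    intro P hPn hsmall
    have hsplit : ({p ∈ P.parts | p.card = 2}).card + ({p ∈ P.parts | ¬ p.card = 2}).card
        = n := by rw [Finset.card_filter_add_card_filter_not, hPn]
    have hsum : ∑ p ∈ P.parts, p.card = k := by
      rw [P.sum_card_parts, card_univ]
    rw [← Finset.sum_filter_add_sum_filter_not P.parts (fun p => p.card = 2)] at hsum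
    have e2 : ∑ p ∈ {p ∈ P.parts | p.card = 2}, p.card
        = 2 * ({p ∈ P.parts | p.card = 2}).card := by
      rw [Finset.sum_congr rfl (fun p hp => (mem_filter.mp hp).2), Finset.sum_const,
        smul_eq_mul]
      ring
    have e1 : ∑ p ∈ {p ∈ P.parts | ¬ p.card = 2}, p.card
        = ({p ∈ P.parts | ¬ p.card = 2}).card := by
      rw [Finset.sum_congr rfl (fun p hp => ?_), Finset.sum_const, smul_eq_mul, mul_one]
      have hp1 := (mem_filter.mp hp).1
      have hp2 := (mem_filter.mp hp).2
      have hle := hsmall p hp1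
      have hpos := Finset.card_pos.mpr (P.nonempty_of_mem_parts hp1)
      omega
    omega
  refine
    { toFun := fun x => ⟨{p ∈ x.1.parts | p.card = 2}, fun p hp =>
        ⟨subset_univ p, (mem_filter.mp hp).2⟩,
        x.1.disjoint.subset (by simp only [coe_filter]; exact Set.sep_subset _ _),
        filter_card x.1 x.2.1 x.2.2⟩
      invFun := fun y => by
        refine ⟨matchingPartition y.1 (fun p hp => (y.2.1 p hp).2) y.2.2.1, ?_, ?_⟩
        · show (y.1 ∪ (Finset.univ \ y.1.sup id).image (fun x => {x})).card = n
          have hdisjU : Disjoint y.1 ((Finset.univ \ y.1.sup id).image (fun x => ({x} : Finset α))) := by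
            rw [Finset.disjoint_left]
            intro p hpM hpI
            obtain ⟨x, _, hx⟩ := mem_image.mp hpI
            have := (y.2.1 p hpM).2
            rw [← hx] at this
            simp at this
          rw [card_union_of_disjoint hdisjU,
            Finset.card_image_of_injective _ Finset.singleton_injective,
            card_sdiff_of_subset (subset_univ _), card_univ,
            card_sup_matching y.1 (fun p hp => (y.2.1 p hp).2) y.2.2.1, y.2.2.2]
          have hle : (y.1.sup id).card ≤ Fintype.card α := by
            rw [← card_univ]; exact card_le_card (subset_univ _)
          rw [card_sup_matching y.1 (fun p hp => (y.2.1 p hp).2) y.2.2.1, y.2.2.2] at hle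
          omega
        · intro p hp
          rcases mem_union.mp hp with hp | hp
          · exact le_of_eq (y.2.1 p hp).2
          · obtain ⟨x, _, hx⟩ := mem_image.mp hp
            rw [← hx]; simp
      left_inv := by
        rintro ⟨P, hPn, hsmall⟩
        apply Subtype.ext
        apply Finpartition.ext
        show ({p ∈ P.parts | p.card = 2} ∪ _) = P.parts
        ext q
        constructor
        · intro hq
          rcases mem_union.mp hq with hq | hq
          · exact (mem_filter.mp hq).1
          · obtain ⟨x, hx, hxq⟩ := mem_image.mp hq
            have hxsup := (mem_sdiff.mp hx).2
            obtain ⟨t, htP, hxt⟩ := P.exists_mem (mem_univ x)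
            have ht2 : t.card ≠ 2 := by
              intro hc
              exact hxsup (mem_sup.mpr ⟨t, mem_filter.mpr ⟨htP, hc⟩, hxt⟩)
            have ht1 : t.card = 1 := by
              have := hsmall t htP
              have := Finset.card_pos.mpr (P.nonempty_of_mem_parts htP)
              omega
            obtain ⟨y, hy⟩ := Finset.card_eq_one.mp ht1
            rw [hy, mem_singleton] at hxt
            rw [← hxq, hxt, ← hy]
            exact htP
        · intro hq
          have hle := hsmall q hq
          have hpos := Finset.card_pos.mpr (P.nonempty_of_mem_parts hq)
          by_cases hc : q.card = 2
          · exact mem_union_left _ (mem_filter.mpr ⟨hq, hc⟩)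
          · have h1 : q.card = 1 := by omega
            obtain ⟨x, hx⟩ := Finset.card_eq_one.mp h1
            apply mem_union_right
            apply mem_image.mpr
            refine ⟨x, mem_sdiff.mpr ⟨mem_univ x, ?_⟩, hx.symm⟩
            intro hsup
            obtain ⟨p, hpM, hxp⟩ := mem_sup.mp hsup
            have hpP := (mem_filter.mp hpM).1
            have hp2 := (mem_filter.mp hpM).2
            have : q = p := P.eq_of_mem_parts hq hpP (by rw [hx]; exact mem_singleton_self x) hxp
            rw [this] at h1
            omega
      right_inv := by
        rintro ⟨M, hM⟩
        apply Subtype.ext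
        show {p ∈ (M ∪ (Finset.univ \ M.sup id).image (fun x => {x})) | p.card = 2} = M
        rw [Finset.filter_union]
        rw [Finset.filter_true_of_mem (fun p hp => (hM.1 p hp).2),
          Finset.filter_false_of_mem, union_empty]
        intro p hp
        obtain ⟨x, _, hx⟩ := mem_image.mp hp
        rw [← hx]
        simp }

end Partition

lemma E_eq_s10 (n k : ℕ) : E 1 n k = if n ≤ k then mm k (k - n) else 0 := by
  classical
  unfold E
  have hcast : ∀ (P : Finpartition (Finset.univ : Finset (Fin k))),
      (∀ p ∈ P.parts, p.card ≤ 1 + 1) ↔ (∀ p ∈ P.parts, p.card ≤ 2) := fun P => Iff.rfl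
  by_cases h : n ≤ k
  · rw [if_pos h]
    have hk : n ≤ Fintype.card (Fin k) := by simpa using h
    have := partition_card_eq (α := Fin k) n hk
    rw [Fintype.card_fin] at this
    rw [this, matchIn_card_eq k Finset.univ (by simp) (k - n)]
  · rw [if_neg h]
    have hE : IsEmpty {P : Finpartition (Finset.univ : Finset (Fin k)) //
        P.parts.card = n ∧ ∀ p ∈ P.parts, p.card ≤ 1 + 1} := by
      constructor
      rintro ⟨P, hPn, -⟩
      have h1 := P.card_parts_le_card
      rw [hPn, Finset.card_univ, Fintype.card_fin] at h1
      exact h (by omega)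
    exact Nat.card_of_isEmpty

lemma G_eq (n : ℕ) : G 1 n = ∑ i ∈ Finset.range (n + 1), mm (n + i) i := by
  unfold G
  rw [show (1 + 1) * n = 2 * n by ring, ← Finset.Ico_add_one_right_eq_Icc, Finset.sum_Ico_eq_sum_range,
    show 2 * n + 1 - n = n + 1 by omega]
  refine Finset.sum_congr rfl fun i _ => ?_
  rw [E_eq_s10, if_pos (by omega : n ≤ n + i), show n + i - n = i by omega]

lemma gsum_rec (n : ℕ) :
    ∑ i ∈ Finset.range (n + 2 + 1), mm (n + 2 + i) i
      = (2 * n + 3) * (∑ i ∈ Finset.range (n + 1 + 1), mm (n + 1 + i) i)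
        + ∑ i ∈ Finset.range (n + 1), mm (n + i) i := by
  rw [Finset.sum_range_succ' (fun i => mm (n + 2 + i) i) (n + 2)]
  rw [Finset.sum_congr rfl (fun i hi =>
    mm_rec2 n i (by have := Finset.mem_range.mp hi; omega))]
  rw [Finset.sum_add_distrib, ← Finset.mul_sum]
  have h1 : ∑ i ∈ Finset.range (n + 2), mm (n + (i + 1)) (i + 1) + mm (n + 0) 0
      = ∑ i ∈ Finset.range (n + 2 + 1), mm (n + i) i :=
    (Finset.sum_range_succ' (fun i => mm (n + i) i) (n + 2)).symm
  have h2 : ∑ i ∈ Finset.range (n + 2 + 1), mm (n + i) i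
      = ∑ i ∈ Finset.range (n + 1), mm (n + i) i := by
    rw [Finset.sum_range_succ, Finset.sum_range_succ, mm_of_lt (by omega), mm_of_lt (by omega)]
    omega
  have h3 : mm (n + 0) 0 = 1 := mm_zero _
  have h4 : mm (n + 2 + 0) 0 = 1 := mm_zero _
  linarith [h1, h2]

theorem stmt_10 :
    G 1 0 = 1 ∧ G 1 1 = 2 ∧
      ∀ n : ℕ, 2 ≤ n → G 1 n = (2 * n - 1) * G 1 (n - 1) + G 1 (n - 2) := by
  refine ⟨?_, ?_, ?_⟩
  · rw [G_eq]; decide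
  · rw [G_eq]; decide
  · intro n hn
    obtain ⟨m, rfl⟩ : ∃ m, n = m + 2 := ⟨n - 2, by omega⟩
    rw [G_eq, show m + 2 - 1 = m + 1 by omega, show m + 2 - 2 = m by omega, G_eq, G_eq,
      show 2 * (m + 2) - 1 = 2 * m + 3 by omega]
    exact gsum_rec m
end

section
/- As n → ∞, G_1(n) is asymptotic to e · (2n)! / (n! · 2^n); that is, lim_{n→∞} G_1(n) · n! · 2^n / (2n)! = e. -/
open Finset


section Other

variable {k : ℕ}

/-- The "other" element of a finset. -/
noncomputable def other (p : Finset (Fin k)) (x : Fin k) : Fin k :=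
  if h : (p.erase x).Nonempty then (p.erase x).min' h else x

lemma erase_eq_other {p : Finset (Fin k)} {x : Fin k} (hp : p.card = 2) (hx : x ∈ p) :
    p.erase x = {other p x} := by
  have hc : (p.erase x).card = 1 := by rw [Finset.card_erase_of_mem hx, hp]
  obtain ⟨a, ha⟩ := Finset.card_eq_one.1 hc
  have hne : (p.erase x).Nonempty := by rw [ha]; exact ⟨a, Finset.mem_singleton_self a⟩
  rw [other, dif_pos hne]
  have key : ∀ (e : Finset (Fin k)) (hne : e.Nonempty), e = {a} → e.min' hne = a := by
    intro e hne h
    subst h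
    simp
  rw [key _ hne ha, ha]

lemma other_mem {p : Finset (Fin k)} {x : Fin k} (hp : p.card = 2) (hx : x ∈ p) :
    other p x ∈ p := by
  have := erase_eq_other hp hx
  have h : other p x ∈ p.erase x := by rw [this]; exact Finset.mem_singleton_self _
  exact Finset.mem_of_mem_erase h

lemma other_ne {p : Finset (Fin k)} {x : Fin k} (hp : p.card = 2) (hx : x ∈ p) :
    other p x ≠ x := by
  have h : other p x ∈ p.erase x := by
    rw [erase_eq_other hp hx]; exact Finset.mem_singleton_self _
  exact Finset.ne_of_mem_erase h

lemma pair_other {p : Finset (Fin k)} {x : Fin k} (hp : p.card = 2) (hx : x ∈ p) :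
    ({x, other p x} : Finset (Fin k)) = p := by
  have := Finset.insert_erase hx
  rw [erase_eq_other hp hx] at this
  simpa using this

lemma eq_other {p : Finset (Fin k)} {x y : Fin k} (hp : p.card = 2) (hx : x ∈ p)
    (hy : y ∈ p) (hxy : y ≠ x) : y = other p x := by
  have h : y ∈ p.erase x := Finset.mem_erase.2 ⟨hxy, hy⟩
  rw [erase_eq_other hp hx] at h
  exact Finset.mem_singleton.1 h

end Other


section Matchings

variable {k i : ℕ}

/-- A matching: a set of `i` pairwise disjoint 2-element subsets. -/
def IsMatching (k i : ℕ) (m : Finset (Finset (Fin k))) : Prop :=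
  (∀ p ∈ m, p.card = 2) ∧ (m : Set (Finset (Fin k))).PairwiseDisjoint id ∧ m.card = i

/-- pairs of an embedding -/
noncomputable def pairs (g : Fin i × Bool ↪ Fin k) : Finset (Finset (Fin k)) :=
  Finset.image (fun j : Fin i => ({g (j, false), g (j, true)} : Finset (Fin k))) Finset.univ

lemma pair_card (g : Fin i × Bool ↪ Fin k) (j : Fin i) :
    ({g (j, false), g (j, true)} : Finset (Fin k)).card = 2 := by
  refine Finset.card_pair ?_
  intro h
  exact Bool.noConfusion (Prod.mk.injEq .. ▸ (g.injective h)).2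

lemma mem_pair_cases {g : Fin i × Bool ↪ Fin k} {j : Fin i} {x : Fin k}
    (hx : x ∈ ({g (j, false), g (j, true)} : Finset (Fin k))) :
    ∃ b, x = g (j, b) := by
  rcases Finset.mem_insert.1 hx with h | h
  · exact ⟨false, h⟩
  · exact ⟨true, Finset.mem_singleton.1 h⟩

lemma pairs_inj (g : Fin i × Bool ↪ Fin k) :
    Function.Injective (fun j : Fin i => ({g (j, false), g (j, true)} : Finset (Fin k))) := by
  intro j j' h
  have h' : ({g (j, false), g (j, true)} : Finset (Fin k))
      = {g (j', false), g (j', true)} := h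
  have hx : g (j, false) ∈ ({g (j', false), g (j', true)} : Finset (Fin k)) := by
    rw [← h']; exact Finset.mem_insert_self _ _
  obtain ⟨b, hb⟩ := mem_pair_cases hx
  have := g.injective hb
  exact (Prod.mk.injEq .. ▸ this).1

lemma pairs_isMatching (g : Fin i × Bool ↪ Fin k) : IsMatching k i (pairs g) := by
  refine ⟨?_, ?_, ?_⟩
  · intro p hp
    obtain ⟨j, _, rfl⟩ := Finset.mem_image.1 hp
    exact pair_card g j
  · intro p hp q hq hpq
    simp only [pairs, Finset.coe_image, Set.mem_image] at hp hq
    obtain ⟨j, _, rfl⟩ := hp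
    obtain ⟨j', _, rfl⟩ := hq
    have hjj : j ≠ j' := fun h => hpq (by rw [h])
    show Disjoint ({g (j, false), g (j, true)} : Finset (Fin k)) {g (j', false), g (j', true)}
    rw [Finset.disjoint_left]
    intro x hx hx'
    obtain ⟨b, rfl⟩ := mem_pair_cases hx
    obtain ⟨b', hb'⟩ := mem_pair_cases hx'
    exact hjj (Prod.mk.injEq .. ▸ (g.injective hb')).1
  · rw [pairs, Finset.card_image_of_injective _ (pairs_inj g)]
    simp

/-- the fiber target type -/
def T (k i : ℕ) (m : Finset (Finset (Fin k))) : Type :=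
  {p : (Fin i ↪ {q // q ∈ m}) × (Fin i → Fin k) // ∀ j, p.2 j ∈ ((p.1 j : Finset (Fin k)))}

noncomputable def fiberEquiv (m : Finset (Finset (Fin k))) (hm : IsMatching k i m) :
    {g : Fin i × Bool ↪ Fin k // pairs g = m} ≃ T k i m where
  toFun := fun ⟨g, hg⟩ =>
    ⟨(⟨fun j => ⟨{g (j, false), g (j, true)}, hg ▸ Finset.mem_image_of_mem _ (Finset.mem_univ j)⟩,
        fun j j' h => pairs_inj g (congrArg Subtype.val h)⟩,
      fun j => g (j, false)),
      fun j => Finset.mem_insert_self _ _⟩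
  invFun := fun ⟨⟨φ, c⟩, hc⟩ =>
    ⟨⟨fun jb => if jb.2 then other (φ jb.1 : Finset (Fin k)) (c jb.1) else c jb.1, by
        intro jb jb' h
        dsimp only at h
        have h2 : ∀ q : Fin i × Bool,
            (if q.2 then other (φ q.1 : Finset (Fin k)) (c q.1) else c q.1) ∈
              (φ q.1 : Finset (Fin k)) := by
          intro q
          by_cases hb : q.2
          · simp only [hb, if_true]
            exact other_mem (hm.1 _ (φ q.1).2) (hc q.1)
          · simp only [hb, if_false]
            exact hc q.1
        have hj : jb.1 = jb'.1 := by
          by_contra hne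
          have hφ : φ jb.1 ≠ φ jb'.1 := fun hh => hne (φ.injective hh)
          have hdisj : Disjoint (φ jb.1 : Finset (Fin k)) (φ jb'.1 : Finset (Fin k)) := by
            refine hm.2.1 (φ jb.1).2 (φ jb'.1).2 ?_
            exact fun hh => hφ (Subtype.ext hh)
          have m1 := h2 jb
          have m2 := h2 jb'
          rw [h] at m1
          exact (Finset.disjoint_left.1 hdisj m1) m2
        rcases jb with ⟨j, b⟩
        rcases jb' with ⟨j', b'⟩
        simp only at hj
        subst hj
        have hcard : (φ j : Finset (Fin k)).card = 2 := hm.1 _ (φ j).2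
        have hcm : c j ∈ (φ j : Finset (Fin k)) := hc j
        simp only [Prod.mk.injEq, true_and]
        cases b <;> cases b' <;> simp only [if_true, if_false] at h
        · rfl
        · exact absurd h.symm (other_ne hcard hcm)
        · exact absurd h (other_ne hcard hcm)
        · rfl⟩, by
      rw [pairs]
      have hpair : ∀ j : Fin i,
          ({(if (false : Bool) then other (φ j : Finset (Fin k)) (c j) else c j),
            (if (true : Bool) then other (φ j : Finset (Fin k)) (c j) else c j)} :
            Finset (Fin k)) = (φ j : Finset (Fin k)) := by
        intro j
        simp only [if_true, if_false]
        exact pair_other (hm.1 _ (φ j).2) (hc j)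
      have himg : Finset.image
          (fun j : Fin i => (φ j : Finset (Fin k))) Finset.univ = m := by
        apply Finset.eq_of_subset_of_card_le
        · intro p hp
          obtain ⟨j, _, rfl⟩ := Finset.mem_image.1 hp
          exact (φ j).2
        · rw [Finset.card_image_of_injective _
            (fun j j' h => φ.injective (Subtype.ext h))]
          simp [hm.2.2]
      calc Finset.image _ Finset.univ
          = Finset.image (fun j : Fin i => (φ j : Finset (Fin k))) Finset.univ := by
            apply Finset.image_congr
            intro j _
            exact hpair j
        _ = m := himg⟩
  left_inv := by
    rintro ⟨g, hg⟩
    apply Subtype.ext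
    apply DFunLike.ext
    rintro ⟨j, b⟩
    show (if b then other ({g (j, false), g (j, true)} : Finset (Fin k)) (g (j, false))
        else g (j, false)) = g (j, b)
    cases b
    · simp
    · simp only [if_true]
      symm
      exact eq_other (pair_card g j) (Finset.mem_insert_self _ _)
        (Finset.mem_insert_of_mem (Finset.mem_singleton_self _))
        (fun h => Bool.noConfusion (Prod.mk.injEq .. ▸ (g.injective h)).2)
  right_inv := by
    rintro ⟨⟨φ, c⟩, hc⟩
    apply Subtype.ext
    apply Prod.ext
    · apply DFunLike.ext
      intro j
      apply Subtype.ext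
      simp only [if_true, if_false]
      exact pair_other (hm.1 _ (φ j).2) (hc j)
    · rfl

end Matchings

section Count

variable {k i : ℕ}

lemma card_T (m : Finset (Finset (Fin k))) (hm : IsMatching k i m) :
    Nat.card (T k i m) = i.factorial * 2 ^ i := by
  classical
  rw [T, Nat.card_eq_fintype_card]
  rw [Fintype.card_congr (Equiv.subtypeProdEquivSigmaSubtype
    (fun (φ : Fin i ↪ {q // q ∈ m}) (c : Fin i → Fin k) =>
      ∀ j, c j ∈ (φ j : Finset (Fin k))))]
  rw [Fintype.card_sigma]
  have hfib : ∀ φ : Fin i ↪ {q // q ∈ m},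
      Fintype.card {c : Fin i → Fin k // ∀ j, c j ∈ (φ j : Finset (Fin k))} = 2 ^ i := by
    intro φ
    rw [Fintype.card_congr (Equiv.subtypePiEquivPi
      (p := fun (j : Fin i) (x : Fin k) => x ∈ (φ j : Finset (Fin k))))]
    rw [Fintype.card_pi]
    have : ∀ j : Fin i, Fintype.card {x : Fin k // x ∈ (φ j : Finset (Fin k))} = 2 := by
      intro j
      exact (Fintype.card_of_subtype (φ j : Finset (Fin k)) (fun x => Iff.rfl)).trans
        (hm.1 _ (φ j).2)
    rw [Finset.prod_congr rfl (fun j _ => this j)]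
    simp
  rw [Finset.sum_congr rfl (fun φ _ => hfib φ)]
  rw [Finset.sum_const, Finset.card_univ, Fintype.card_embedding_eq]
  rw [Fintype.card_coe, Fintype.card_fin, hm.2.2, Nat.descFactorial_self]
  simp [mul_comm]

lemma card_matchings (k i : ℕ) :
    Nat.card {m : Finset (Finset (Fin k)) // IsMatching k i m} * (i.factorial * 2 ^ i)
      = k.descFactorial (2 * i) := by
  classical
  have hΦ : ∀ g : Fin i × Bool ↪ Fin k,
      IsMatching k i (pairs g) := pairs_isMatching
  set Φ : (Fin i × Bool ↪ Fin k) → {m : Finset (Finset (Fin k)) // IsMatching k i m} :=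
    fun g => ⟨pairs g, hΦ g⟩ with hΦdef
  have e1 : (Fin i × Bool ↪ Fin k) ≃
      Σ m : {m : Finset (Finset (Fin k)) // IsMatching k i m}, {g // Φ g = m} :=
    (Equiv.sigmaFiberEquiv Φ).symm
  have hcard1 : Fintype.card (Fin i × Bool ↪ Fin k) = k.descFactorial (2 * i) := by
    rw [Fintype.card_embedding_eq, Fintype.card_prod, Fintype.card_fin, Fintype.card_bool,
      Fintype.card_fin, mul_comm]
  rw [← hcard1, Fintype.card_congr e1, Fintype.card_sigma]
  have hfib : ∀ m : {m : Finset (Finset (Fin k)) // IsMatching k i m},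
      Fintype.card {g // Φ g = m} = i.factorial * 2 ^ i := by
    intro m
    have e2 : {g // Φ g = m} ≃ {g : Fin i × Bool ↪ Fin k // pairs g = m.1} :=
      Equiv.subtypeEquivRight (fun g => by
        constructor
        · intro h; exact congrArg Subtype.val h
        · intro h; exact Subtype.ext h)
    rw [← Nat.card_eq_fintype_card, Nat.card_congr (e2.trans (fiberEquiv m.1 m.2))]
    exact card_T m.1 m.2
  rw [Finset.sum_congr rfl (fun m _ => hfib m), Finset.sum_const, Finset.card_univ,
    Nat.card_eq_fintype_card]
  simp [mul_comm]

end Count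

section Partition

open Finset

variable {n k : ℕ}

lemma part_filter_card (P : Finpartition (Finset.univ : Finset (Fin k)))
    (hn : P.parts.card = n) (hle : ∀ p ∈ P.parts, p.card ≤ 2) :
    (P.parts.filter (fun p => p.card = 2)).card = k - n ∧ n ≤ k ∧ k ≤ 2 * n := by
  classical
  have hsum : ∑ p ∈ P.parts, p.card = k := by
    rw [P.sum_card_parts]; simp
  have hab : (P.parts.filter (fun p => p.card = 2)).card
      + (P.parts.filter (fun p => ¬ p.card = 2)).card = n := by
    rw [Finset.card_filter_add_card_filter_not]; exact hn
  have hsplit : ∑ p ∈ P.parts.filter (fun p => p.card = 2), p.card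
      + ∑ p ∈ P.parts.filter (fun p => ¬ p.card = 2), p.card = k := by
    rw [Finset.sum_filter_add_sum_filter_not]; exact hsum
  have hA : ∑ p ∈ P.parts.filter (fun p => p.card = 2), p.card
      = (P.parts.filter (fun p => p.card = 2)).card * 2 :=
    Finset.sum_const_nat (fun p hp => (Finset.mem_filter.1 hp).2)
  have hB : ∑ p ∈ P.parts.filter (fun p => ¬ p.card = 2), p.card
      = (P.parts.filter (fun p => ¬ p.card = 2)).card * 1 := by
    refine Finset.sum_const_nat (fun p hp => ?_)
    have hmem := (Finset.mem_filter.1 hp).1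
    have h2 := (Finset.mem_filter.1 hp).2
    have hpos : 0 < p.card := Finset.card_pos.2 (P.nonempty_of_mem_parts hmem)
    have := hle p hmem
    omega
  rw [hA, hB] at hsplit
  omega

/-- Build a finpartition of `univ : Finset (Fin k)` from a matching. -/
noncomputable def partOfMatch (m : Finset (Finset (Fin k)))
    (hm2 : ∀ p ∈ m, p.card = 2)
    (hdisj : (m : Set (Finset (Fin k))).PairwiseDisjoint id) :
    Finpartition (Finset.univ : Finset (Fin k)) where
  parts := m ∪ (Finset.univ \ m.biUnion id).image (fun x => {x})
  supIndep := by
    rw [Finset.supIndep_iff_pairwiseDisjoint]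
    intro p hp q hq hpq
    show Disjoint p q
    simp only [Finset.coe_union, Set.mem_union, Finset.mem_coe, Finset.mem_union,
      Finset.coe_image, Set.mem_image, Finset.mem_coe] at hp hq
    rcases hp with hp | hp <;> rcases hq with hq | hq
    · exact hdisj hp hq hpq
    · obtain ⟨x, hx, rfl⟩ := hq
      rw [Finset.disjoint_singleton_right]
      intro hxp
      rw [Finset.mem_sdiff] at hx
      exact hx.2 (Finset.mem_biUnion.2 ⟨p, hp, hxp⟩)
    · obtain ⟨x, hx, rfl⟩ := hp
      rw [Finset.disjoint_singleton_left]
      intro hxq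
      rw [Finset.mem_sdiff] at hx
      exact hx.2 (Finset.mem_biUnion.2 ⟨q, hq, hxq⟩)
    · obtain ⟨x, hx, rfl⟩ := hp
      obtain ⟨y, hy, rfl⟩ := hq
      rw [Finset.disjoint_singleton]
      intro h
      exact hpq (by rw [h])
  sup_parts := by
    apply le_antisymm
    · exact Finset.sup_le (fun p _ => Finset.subset_univ p)
    · intro x _
      rw [Finset.mem_sup]
      by_cases hxm : x ∈ m.biUnion id
      · obtain ⟨p, hp, hxp⟩ := Finset.mem_biUnion.1 hxm
        exact ⟨p, Finset.mem_union_left _ hp, hxp⟩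
      · refine ⟨{x}, Finset.mem_union_right _ ?_, Finset.mem_singleton_self x⟩
        exact Finset.mem_image_of_mem _ (Finset.mem_sdiff.2 ⟨Finset.mem_univ x, hxm⟩)
  bot_notMem := by
    rw [Finset.bot_eq_empty, Finset.mem_union]
    rintro (h | h)
    · have := hm2 _ h
      simp at this
    · obtain ⟨x, _, hx⟩ := Finset.mem_image.1 h
      exact Finset.singleton_ne_empty x hx

lemma partOfMatch_parts (m : Finset (Finset (Fin k)))
    (hm2 : ∀ p ∈ m, p.card = 2)
    (hdisj : (m : Set (Finset (Fin k))).PairwiseDisjoint id) :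
    (partOfMatch m hm2 hdisj).parts
      = m ∪ (Finset.univ \ m.biUnion id).image (fun x => {x}) := rfl

lemma partOfMatch_parts_card (m : Finset (Finset (Fin k)))
    (hm2 : ∀ p ∈ m, p.card = 2)
    (hdisj : (m : Set (Finset (Fin k))).PairwiseDisjoint id) :
    (partOfMatch m hm2 hdisj).parts.card = m.card + (k - 2 * m.card) := by
  classical
  rw [partOfMatch_parts]
  have hdisjU : Disjoint m ((Finset.univ \ m.biUnion id).image (fun x : Fin k => {x})) := by
    rw [Finset.disjoint_left]
    intro p hp hq
    obtain ⟨x, _, rfl⟩ := Finset.mem_image.1 hq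
    have := hm2 _ hp
    simp at this
  rw [Finset.card_union_of_disjoint hdisjU]
  congr 1
  rw [Finset.card_image_of_injective _ (fun a b h => Finset.singleton_injective h)]
  have hbu : (m.biUnion id).card = 2 * m.card := by
    rw [Finset.card_biUnion (fun p hp q hq hpq => hdisj hp hq hpq)]
    simp only [id_eq]
    rw [Finset.sum_const_nat (fun p hp => hm2 p hp)]
    ring
  rw [Finset.card_sdiff_of_subset (Finset.subset_univ _), hbu]
  simp

end Partition

section PartMatchEquiv

open Finset

noncomputable def partMatchEquiv (n k : ℕ) (h1 : n ≤ k) (h2 : k ≤ 2 * n) :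
    {P : Finpartition (Finset.univ : Finset (Fin k)) //
        P.parts.card = n ∧ ∀ p ∈ P.parts, p.card ≤ 2}
      ≃ {m : Finset (Finset (Fin k)) // IsMatching k (k - n) m} where
  toFun := fun ⟨P, hP⟩ =>
    ⟨P.parts.filter (fun p => p.card = 2),
      fun p hp => (Finset.mem_filter.1 hp).2,
      P.disjoint.subset (by
        intro p hp
        simp only [Finset.coe_filter, Set.mem_setOf_eq] at hp
        exact hp.1),
      (part_filter_card P hP.1 hP.2).1⟩
  invFun := fun ⟨m, hm⟩ =>
    ⟨partOfMatch m hm.1 hm.2.1, by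
      rw [partOfMatch_parts_card m hm.1 hm.2.1, hm.2.2]
      omega, by
      intro p hp
      rw [partOfMatch_parts] at hp
      rcases Finset.mem_union.1 hp with h | h
      · exact (hm.1 p h).le
      · obtain ⟨x, _, rfl⟩ := Finset.mem_image.1 h
        simp⟩
  left_inv := by
    rintro ⟨P, hP⟩
    apply Subtype.ext
    apply Finpartition.ext
    rw [partOfMatch_parts]
    apply Finset.Subset.antisymm
    · intro p hp
      rcases Finset.mem_union.1 hp with h | h
      · exact Finset.mem_of_mem_filter p h
      · obtain ⟨x, hx, rfl⟩ := Finset.mem_image.1 h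
        rw [Finset.mem_sdiff] at hx
        -- x is not covered by any 2-element part, so its part is {x}
        have hxu : x ∈ (Finset.univ : Finset (Fin k)) := Finset.mem_univ x
        have hpart := P.part_mem.2 hxu
        have hxpart := P.mem_part hxu
        have hcard : (P.part x).card = 1 := by
          have hle := hP.2 _ hpart
          have hpos : 0 < (P.part x).card :=
            Finset.card_pos.2 ⟨x, hxpart⟩
          rcases Nat.lt_or_ge (P.part x).card 2 with h' | h'
          · omega
          · exfalso
            apply hx.2
            refine Finset.mem_biUnion.2 ⟨P.part x, ?_, hxpart⟩
            exact Finset.mem_filter.2 ⟨hpart, by omega⟩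
        obtain ⟨y, hy⟩ := Finset.card_eq_one.1 hcard
        have : x = y := by
          have := hxpart
          rw [hy, Finset.mem_singleton] at this
          exact this
        rw [← this] at hy
        rw [← hy]
        exact hpart
    · intro p hp
      by_cases h2c : p.card = 2
      · exact Finset.mem_union_left _ (Finset.mem_filter.2 ⟨hp, h2c⟩)
      · have hle := hP.2 _ hp
        have hpos : 0 < p.card := Finset.card_pos.2 (P.nonempty_of_mem_parts hp)
        have h1c : p.card = 1 := by omega
        obtain ⟨x, rfl⟩ := Finset.card_eq_one.1 h1c
        refine Finset.mem_union_right _ (Finset.mem_image_of_mem _ ?_)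
        rw [Finset.mem_sdiff]
        refine ⟨Finset.mem_univ x, ?_⟩
        intro hxb
        obtain ⟨q, hq, hxq⟩ := Finset.mem_biUnion.1 hxb
        have hqparts := Finset.mem_of_mem_filter q hq
        have : q = {x} := P.eq_of_mem_parts hqparts hp hxq (Finset.mem_singleton_self x)
        have hq2 := (Finset.mem_filter.1 hq).2
        rw [this] at hq2
        simp at hq2
  right_inv := by
    rintro ⟨m, hm⟩
    apply Subtype.ext
    show (partOfMatch m hm.1 hm.2.1).parts.filter (fun p => p.card = 2) = m
    rw [partOfMatch_parts, Finset.filter_union]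
    have hm' : m.filter (fun p => p.card = 2) = m :=
      Finset.filter_true_of_mem (fun p hp => hm.1 p hp)
    have hs : ((Finset.univ \ m.biUnion id).image
          (fun x : Fin k => ({x} : Finset (Fin k)))).filter
        (fun p => p.card = 2) = ∅ := by
      rw [Finset.filter_eq_empty_iff]
      intro p hp
      obtain ⟨x, _, rfl⟩ := Finset.mem_image.1 hp
      simp
    rw [hm', hs, Finset.union_empty]

end PartMatchEquiv

section EFormula

lemma E_eq_card_matchings (n k : ℕ) (h1 : n ≤ k) (h2 : k ≤ 2 * n) :
    E 1 n k = Nat.card {m : Finset (Finset (Fin k)) // IsMatching k (k - n) m} := by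
  rw [E]
  exact Nat.card_congr (partMatchEquiv n k h1 h2)

/-- Key identity: `E 1 n k * ((k-n)! * 2^(k-n)) = k.descFactorial (2*(k-n))`. -/
lemma E_identity (n k : ℕ) (h1 : n ≤ k) (h2 : k ≤ 2 * n) :
    E 1 n k * ((k - n).factorial * 2 ^ (k - n)) = k.descFactorial (2 * (k - n)) := by
  rw [E_eq_card_matchings n k h1 h2]
  exact card_matchings k (k - n)

end EFormula

section NatIneq

lemma two_pow_descFactorial_le (n : ℕ) : ∀ j : ℕ, 2 ^ j * n.descFactorial j ≤ (2 * n).descFactorial j := by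
  intro j
  induction j with
  | zero => simp
  | succ j ih =>
    rw [Nat.descFactorial_succ, Nat.descFactorial_succ, pow_succ]
    calc 2 ^ j * 2 * ((n - j) * n.descFactorial j)
        = (2 * (n - j)) * (2 ^ j * n.descFactorial j) := by ring
      _ ≤ (2 * n - j) * ((2 * n).descFactorial j) :=
          Nat.mul_le_mul (by omega) ih

lemma E_nat_id (n j : ℕ) (hj : j ≤ n) :
    E 1 n (2 * n - j) * n.factorial * 2 ^ n * ((2 * n).descFactorial j * j.factorial)
      = 2 ^ j * n.descFactorial j * (2 * n).factorial := by
  have h1 : n ≤ 2 * n - j := by omega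
  have h2 : 2 * n - j ≤ 2 * n := by omega
  have hA := E_identity n (2 * n - j) h1 h2
  rw [show 2 * n - j - n = n - j by omega] at hA
  have hB : j.factorial * (2 * n - j).descFactorial (2 * (n - j)) = (2 * n - j).factorial := by
    have := Nat.factorial_mul_descFactorial (n := 2 * n - j) (k := 2 * (n - j)) (by omega)
    rwa [show 2 * n - j - 2 * (n - j) = j by omega] at this
  have hC : (n - j).factorial * n.descFactorial j = n.factorial :=
    Nat.factorial_mul_descFactorial hj
  have hD : (2 * n - j).factorial * (2 * n).descFactorial j = (2 * n).factorial :=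
    Nat.factorial_mul_descFactorial (by omega)
  rw [← hC, ← hD, show (2:ℕ) ^ n = 2 ^ (n - j) * 2 ^ j by rw [← pow_add]; congr 1; omega]
  rw [← hB, ← hA]
  ring

lemma term_eq (n j : ℕ) (hj : j ≤ n) :
    (E 1 n (2 * n - j) : ℝ) * n.factorial * 2 ^ n / (2 * n).factorial
      = (2 ^ j * n.descFactorial j : ℝ) / ((2 * n).descFactorial j * j.factorial) := by
  have h1 : ((2 * n).factorial : ℝ) ≠ 0 := Nat.cast_ne_zero.2 (Nat.factorial_ne_zero _)
  have h2 : ((2 * n).descFactorial j : ℝ) * j.factorial ≠ 0 := by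
    apply mul_ne_zero
    · refine Nat.cast_ne_zero.2 ?_
      intro h0
      have := Nat.descFactorial_eq_zero_iff_lt.1 h0
      omega
    · exact Nat.cast_ne_zero.2 (Nat.factorial_ne_zero _)
  rw [div_eq_div_iff h1 h2]
  have hid := E_nat_id n j hj
  have hid' : ((E 1 n (2 * n - j) * n.factorial * 2 ^ n
      * ((2 * n).descFactorial j * j.factorial) : ℕ) : ℝ)
      = ((2 ^ j * n.descFactorial j * (2 * n).factorial : ℕ) : ℝ) := by
    exact_mod_cast congrArg (Nat.cast : ℕ → ℝ) hid
  push_cast at hid'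
  linarith [hid']

end NatIneq

section Analysis

open Filter Finset Topology

noncomputable def gterm (n j : ℕ) : ℝ :=
  if j ≤ n then (2 ^ j * n.descFactorial j : ℝ) / ((2 * n).descFactorial j * j.factorial)
  else 0

lemma descFactorial_cast_ne_zero {n j : ℕ} (h : j ≤ n) :
    ((n.descFactorial j : ℕ) : ℝ) ≠ 0 := by
  refine Nat.cast_ne_zero.2 ?_
  intro h0
  have := Nat.descFactorial_eq_zero_iff_lt.1 h0
  omega

lemma gterm_nonneg (n j : ℕ) : 0 ≤ gterm n j := by
  rw [gterm]
  split
  · positivity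
  · exact le_refl 0

lemma gterm_le (n j : ℕ) : gterm n j ≤ (j.factorial : ℝ)⁻¹ := by
  rw [gterm]
  split
  case isTrue h =>
    have hdpos : (0:ℝ) < ((2 * n).descFactorial j : ℝ) :=
      lt_of_le_of_ne (Nat.cast_nonneg _) (descFactorial_cast_ne_zero (by omega)).symm
    have hfpos : (0:ℝ) < (j.factorial : ℝ) := by
      exact_mod_cast Nat.factorial_pos j
    have hnum : ((2:ℝ) ^ j * (n.descFactorial j : ℝ)) ≤ ((2 * n).descFactorial j : ℝ) := by
      exact_mod_cast two_pow_descFactorial_le n j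
    calc ((2:ℝ) ^ j * (n.descFactorial j : ℝ)) / (((2 * n).descFactorial j : ℝ) * j.factorial)
        ≤ ((2 * n).descFactorial j : ℝ) / (((2 * n).descFactorial j : ℝ) * j.factorial) := by
          gcongr
      _ = (j.factorial : ℝ)⁻¹ := by field_simp
  case isFalse h => positivity

lemma cast_descFactorial (n j : ℕ) (h : j ≤ n) :
    ((n.descFactorial j : ℕ) : ℝ) = ∏ m ∈ Finset.range j, ((n:ℝ) - m) := by
  rw [Nat.descFactorial_eq_prod_range, Nat.cast_prod]
  refine Finset.prod_congr rfl (fun m hm => ?_)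
  have hm' : m ≤ n := le_trans (Nat.le_of_lt (Finset.mem_range.1 hm)) h
  push_cast [Nat.cast_sub hm']
  ring

lemma gterm_tendsto (j : ℕ) :
    Tendsto (fun n => gterm n j) atTop (𝓝 ((j.factorial : ℝ)⁻¹)) := by
  have hr : Tendsto (fun n : ℕ => ∏ m ∈ Finset.range j,
      (2 * ((n:ℝ) - m) / (2 * (n:ℝ) - m))) atTop (𝓝 1) := by
    have h1 : (1:ℝ) = ∏ m ∈ Finset.range j, (1:ℝ) := by simp
    rw [h1]
    apply tendsto_finset_prod
    intro m _
    have hden : Tendsto (fun n : ℕ => 2 * (n:ℝ) - m) atTop atTop := by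
      apply Filter.tendsto_atTop_add_const_right
      exact (tendsto_natCast_atTop_atTop (R := ℝ)).const_mul_atTop (by norm_num)
    have h0 : Tendsto (fun n : ℕ => (m:ℝ) / (2 * (n:ℝ) - m)) atTop (𝓝 0) :=
      Filter.Tendsto.div_atTop tendsto_const_nhds hden
    have h2 : Tendsto (fun n : ℕ => 1 - (m:ℝ) / (2 * (n:ℝ) - m)) atTop (𝓝 1) := by
      have := (tendsto_const_nhds (x := (1:ℝ)) (f := (atTop : Filter ℕ))).sub h0
      simpa using this
    apply h2.congr'
    filter_upwards [eventually_ge_atTop (m + 1)] with n hn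
    have hpos : (0:ℝ) < 2 * (n:ℝ) - m := by
      have : (m:ℝ) + 1 ≤ (n:ℝ) := by exact_mod_cast hn
      linarith
    field_simp
    ring
  have h2 : Tendsto (fun n : ℕ => (∏ m ∈ Finset.range j,
      (2 * ((n:ℝ) - m) / (2 * (n:ℝ) - m))) * (j.factorial : ℝ)⁻¹) atTop
      (𝓝 ((j.factorial : ℝ)⁻¹)) := by
    simpa using hr.mul_const ((j.factorial : ℝ)⁻¹)
  apply h2.congr'
  filter_upwards [eventually_ge_atTop j] with n hn
  rw [gterm, if_pos hn]
  have e1 : ∏ m ∈ Finset.range j, (2 * ((n:ℝ) - m))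
      = (2:ℝ) ^ j * (n.descFactorial j : ℝ) := by
    rw [Finset.prod_mul_distrib, Finset.prod_const, Finset.card_range,
      cast_descFactorial n j hn]
  have e2 : ∏ m ∈ Finset.range j, (2 * (n:ℝ) - m) = ((2 * n).descFactorial j : ℝ) := by
    rw [cast_descFactorial (2 * n) j (by omega)]
    refine Finset.prod_congr rfl (fun m _ => ?_)
    push_cast
    ring
  rw [Finset.prod_div_distrib, e1, e2, ← div_eq_mul_inv, div_div]

lemma sum_eq_tsum (n : ℕ) :
    (G 1 n : ℝ) * n.factorial * 2 ^ n / (2 * n).factorial = ∑' j, gterm n j := by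
  rw [tsum_eq_sum (s := Finset.range (n + 1))
    (fun j hj => by rw [gterm, if_neg (fun h => hj (Finset.mem_range.2 (by omega)))])]
  have hG : G 1 n = ∑ k ∈ Finset.Icc n (2 * n), E 1 n k := by
    rw [G, show (1 + 1) * n = 2 * n by ring]
  rw [hG, Nat.cast_sum, Finset.sum_mul, Finset.sum_mul, Finset.sum_div]
  refine Finset.sum_nbij' (fun k => 2 * n - k) (fun j => 2 * n - j) ?_ ?_ ?_ ?_ ?_
  · intro k hk
    rw [Finset.mem_Icc] at hk
    rw [Finset.mem_range]
    omega
  · intro j hj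
    rw [Finset.mem_range] at hj
    rw [Finset.mem_Icc]
    omega
  · intro k hk
    rw [Finset.mem_Icc] at hk
    omega
  · intro j hj
    rw [Finset.mem_range] at hj
    omega
  · intro k hk
    rw [Finset.mem_Icc] at hk
    have hj : 2 * n - k ≤ n := by omega
    rw [gterm, if_pos hj, ← term_eq n (2 * n - k) hj,
      show 2 * n - (2 * n - k) = k by omega]

end Analysis

open Filter in
theorem stmt_12 :
    Tendsto (fun n : ℕ =>
        (G 1 n : ℝ) * n.factorial * 2 ^ n / (2 * n).factorial)
      atTop (nhds (Real.exp 1)) := by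
  have hsummable : Summable (fun j : ℕ => (j.factorial : ℝ)⁻¹) := by
    refine (Real.summable_pow_div_factorial 1).congr (fun j => ?_)
    simp [div_eq_mul_inv]
  have hmain : Tendsto (fun n : ℕ => ∑' j, gterm n j) atTop
      (nhds (∑' j : ℕ, (j.factorial : ℝ)⁻¹)) := by
    apply tendsto_tsum_of_dominated_convergence hsummable gterm_tendsto
    filter_upwards with n
    intro j
    rw [Real.norm_eq_abs, abs_of_nonneg (gterm_nonneg n j)]
    exact gterm_le n j
  have hexp : Real.exp 1 = ∑' j : ℕ, (j.factorial : ℝ)⁻¹ := by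
    rw [Real.exp_eq_exp_ℝ, NormedSpace.exp_eq_tsum ℝ]
    simp [smul_eq_mul]
  rw [hexp]
  exact hmain.congr (fun n => (sum_eq_tsum n).symm)
end

section
/- For each σ ≥ 0 and n ≥ 1, the number of possible play-out scenarios of the gift exchange game with n gifts and steal limit σ, in which guests take gifts from the pool in the fixed order 1,2,...,n, equals Σ_{k=n-1}^{(σ+1)(n-1)} E_σ(n-1, k). Equivalently: the number of finite sequences over {1,...,n} that begin with 1, end with n, contain n exactly once, contain each i ∈ {1,...,n-1} at least once and at most σ+1 times, and in which the first occurrence of i (for i ≥ 2) appears only after an occurrence of i−1, equals Σ_{k=n-1}^{(σ+1)(n-1)} E_σ(n-1, k). -/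
open Finset

namespace GiftAux

/-! ### List helpers -/

lemma count_ofFn {k : ℕ} (f : Fin k → ℕ) (v : ℕ) :
    (List.ofFn f).count v = (Finset.univ.filter fun j => f j = v).card := by
  induction k with
  | zero => simp
  | succ k ih =>
    rw [List.ofFn_succ, List.count_cons, ih, Finset.card_filter, Finset.card_filter,
      Fin.sum_univ_succ]
    simp only [beq_iff_eq]
    omega

lemma indexOf_le {l : List ℕ} {v : ℕ} {i : ℕ} (hi : i < l.length) (hv : l.get ⟨i, hi⟩ = v) :
    l.idxOf v ≤ i := by
  induction l generalizing i with
  | nil => simp at hi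
  | cons a t ih =>
    cases i with
    | zero =>
      simp only [List.get] at hv
      rw [List.idxOf_cons_eq _ hv]
    | succ i =>
      by_cases h : a = v
      · rw [List.idxOf_cons_eq _ h]; omega
      · rw [List.idxOf_cons_ne _ h]
        exact Nat.succ_le_succ (ih (by simpa using hi) hv)

lemma indexOf_eq {l : List ℕ} {v : ℕ} {i : ℕ} (hi : i < l.length) (hv : l.get ⟨i, hi⟩ = v)
    (hmin : ∀ j (hj : j < i), l.get ⟨j, hj.trans hi⟩ ≠ v) : l.idxOf v = i := by
  refine le_antisymm (indexOf_le hi hv) ?_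
  by_contra h
  push_neg at h
  have hmem : v ∈ l := List.mem_iff_get.mpr ⟨⟨i, hi⟩, hv⟩
  exact hmin _ h (List.idxOf_get (List.idxOf_lt_length_iff.2 hmem))

/-! ### Partition labelling -/

/-- The value of the least element of a finset of `Fin k` (`0` if empty). -/
def minOf {k : ℕ} (p : Finset (Fin k)) : ℕ :=
  if h : p.Nonempty then (p.min' h : ℕ) else 0

section Core

variable {m k : ℕ} (P : Finpartition (Finset.univ : Finset (Fin k)))

lemma minOf_injOn : Set.InjOn minOf (P.parts : Set (Finset (Fin k))) := by
  intro p hp q hq h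
  have hpne := P.nonempty_of_mem_parts hp
  have hqne := P.nonempty_of_mem_parts hq
  rw [minOf, dif_pos hpne, minOf, dif_pos hqne] at h
  have hmin : p.min' hpne = q.min' hqne := Fin.val_injective h
  exact P.eq_of_mem_parts hp hq (p.min'_mem hpne) (hmin ▸ q.min'_mem hqne)

variable (hm : P.parts.card = m)
include hm

lemma card_mins : (P.parts.image minOf).card = m := by
  rw [Finset.card_image_of_injOn (minOf_injOn P), hm]

/-- The increasing enumeration of the minima of the parts. -/
noncomputable def pmin : Fin m → ℕ :=
  ⇑((P.parts.image minOf).orderEmbOfFin (card_mins P hm))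

lemma pmin_strictMono : StrictMono (pmin P hm) :=
  ((P.parts.image minOf).orderEmbOfFin (card_mins P hm)).strictMono

/-- The canonical label of a position: one plus the rank of its part. -/
noncomputable def label (j : Fin k) : ℕ :=
  ((((P.parts.image minOf).orderIsoOfFin (card_mins P hm)).symm
    ⟨minOf (P.part j), Finset.mem_image_of_mem _ (P.part_mem.2 (Finset.mem_univ j))⟩ : Fin m) : ℕ)
    + 1

lemma one_le_label (j : Fin k) : 1 ≤ label P hm j := Nat.le_add_left 1 _

lemma label_le (j : Fin k) : label P hm j ≤ m := by
  have := (((P.parts.image minOf).orderIsoOfFin (card_mins P hm)).symm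
    ⟨minOf (P.part j), Finset.mem_image_of_mem _ (P.part_mem.2 (Finset.mem_univ j))⟩).isLt
  unfold label
  omega

lemma label_eq_iff (t : Fin m) (j : Fin k) :
    label P hm j = (t : ℕ) + 1 ↔ minOf (P.part j) = pmin P hm t := by
  unfold label pmin
  rw [Nat.add_right_cancel_iff, Fin.val_eq_val, OrderIso.symm_apply_eq, ← Subtype.coe_inj,
    Finset.coe_orderIsoOfFin_apply]

lemma label_mem_part_iff (t : Fin m) (j : Fin k) {p : Finset (Fin k)} (hp : p ∈ P.parts)
    (hmin : minOf p = pmin P hm t) : label P hm j = (t : ℕ) + 1 ↔ j ∈ p := by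
  rw [label_eq_iff]
  constructor
  · intro h
    have hpj : P.part j = p :=
      minOf_injOn P (P.part_mem.2 (Finset.mem_univ j)) hp (h.trans hmin.symm)
    exact hpj ▸ P.mem_part (Finset.mem_univ j)
  · intro h
    rw [P.part_eq_of_mem hp h, hmin]

lemma exists_part_pmin (t : Fin m) : ∃ p ∈ P.parts, minOf p = pmin P hm t := by
  have := Finset.orderEmbOfFin_mem (P.parts.image minOf) (card_mins P hm) t
  rw [Finset.mem_image] at this
  exact this

lemma pmin_lt (t : Fin m) : pmin P hm t < k := by
  obtain ⟨p, hp, hmin⟩ := exists_part_pmin P hm t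
  have hne := P.nonempty_of_mem_parts hp
  rw [← hmin, minOf, dif_pos hne]
  exact (p.min' hne).isLt

lemma mem_part_pmin (t : Fin m) {p : Finset (Fin k)} (hp : p ∈ P.parts)
    (hmin : minOf p = pmin P hm t) : (⟨pmin P hm t, pmin_lt P hm t⟩ : Fin k) ∈ p := by
  have hne := P.nonempty_of_mem_parts hp
  have hv : (p.min' hne : ℕ) = pmin P hm t := by rw [← hmin, minOf, dif_pos hne]
  have : (⟨pmin P hm t, pmin_lt P hm t⟩ : Fin k) = p.min' hne := Fin.ext hv.symm
  rw [this]
  exact p.min'_mem hne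

lemma count_label (t : Fin m) {p : Finset (Fin k)} (hp : p ∈ P.parts)
    (hmin : minOf p = pmin P hm t) :
    (List.ofFn (label P hm)).count ((t : ℕ) + 1) = p.card := by
  rw [count_ofFn]
  congr 1
  ext j
  simp only [Finset.mem_filter, Finset.mem_univ, true_and]
  exact label_mem_part_iff P hm t j hp hmin

lemma count_label_zero {v : ℕ} (hv : v = 0 ∨ m + 1 ≤ v) :
    (List.ofFn (label P hm)).count v = 0 := by
  refine List.count_eq_zero.2 fun hmem => ?_
  rw [List.mem_ofFn] at hmem
  obtain ⟨j, rfl⟩ := hmem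
  have h1 := one_le_label P hm j
  have h2 := label_le P hm j
  omega

lemma indexOf_label (t : Fin m) :
    (List.ofFn (label P hm)).idxOf ((t : ℕ) + 1) = pmin P hm t := by
  obtain ⟨p, hp, hmin⟩ := exists_part_pmin P hm t
  have hne := P.nonempty_of_mem_parts hp
  have hlt : pmin P hm t < (List.ofFn (label P hm)).length := by
    simpa using pmin_lt P hm t
  refine indexOf_eq hlt ?_ ?_
  · rw [List.get_ofFn]
    refine (label_mem_part_iff P hm t _ hp hmin).2 ?_
    have : (Fin.cast (by simp) (⟨pmin P hm t, hlt⟩ : Fin (List.ofFn (label P hm)).length) : Fin k)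
        = ⟨pmin P hm t, pmin_lt P hm t⟩ := Fin.ext rfl
    rw [this]
    exact mem_part_pmin P hm t hp hmin
  · intro j hj hcon
    rw [List.get_ofFn] at hcon
    have hjmem : (Fin.cast (by simp) (⟨j, hj.trans hlt⟩ : Fin (List.ofFn (label P hm)).length)
        : Fin k) ∈ p := (label_mem_part_iff P hm t _ hp hmin).1 hcon
    have hle : p.min' hne ≤ Fin.cast (by simp)
        (⟨j, hj.trans hlt⟩ : Fin (List.ofFn (label P hm)).length) := p.min'_le _ hjmem
    have hv : (p.min' hne : ℕ) = pmin P hm t := by rw [← hmin, minOf, dif_pos hne]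
    have : (p.min' hne : ℕ) ≤ j := hle
    omega

lemma label_zero (hk : 0 < k) (hm0 : 0 < m) :
    label P hm ⟨0, hk⟩ = 1 := by
  have h0mem : (0 : ℕ) ∈ P.parts.image minOf := by
    rw [Finset.mem_image]
    refine ⟨P.part ⟨0, hk⟩, P.part_mem.2 (Finset.mem_univ _), ?_⟩
    have hne : (P.part (⟨0, hk⟩ : Fin k)).Nonempty := ⟨_, P.mem_part (Finset.mem_univ _)⟩
    rw [minOf, dif_pos hne]
    have h1 : (P.part (⟨0, hk⟩ : Fin k)).min' hne ≤ ⟨0, hk⟩ :=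
      Finset.min'_le _ _ (P.mem_part (Finset.mem_univ _))
    have h2 : ((P.part (⟨0, hk⟩ : Fin k)).min' hne : ℕ) ≤ 0 := h1
    omega
  -- the smallest value of pmin is 0
  set t0 := ((P.parts.image minOf).orderIsoOfFin (card_mins P hm)).symm ⟨0, h0mem⟩ with ht0
  have hpt0 : pmin P hm t0 = 0 := by
    have happ : ((P.parts.image minOf).orderIsoOfFin (card_mins P hm)) t0 = ⟨0, h0mem⟩ :=
      OrderIso.apply_symm_apply _ _
    unfold pmin
    rw [← Finset.coe_orderIsoOfFin_apply, happ]
  have hle : pmin P hm ⟨0, hm0⟩ ≤ pmin P hm t0 :=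
    (pmin_strictMono P hm).monotone (by exact Fin.mk_le_mk.2 (Nat.zero_le _))
  have hge : pmin P hm ⟨0, hm0⟩ = 0 := by omega
  have hmin0 : minOf (P.part (⟨0, hk⟩ : Fin k)) = pmin P hm ⟨0, hm0⟩ := by
    rw [hge]
    have hne : (P.part (⟨0, hk⟩ : Fin k)).Nonempty := ⟨_, P.mem_part (Finset.mem_univ _)⟩
    rw [minOf, dif_pos hne]
    have h1 : (P.part (⟨0, hk⟩ : Fin k)).min' hne ≤ ⟨0, hk⟩ :=
      Finset.min'_le _ _ (P.mem_part (Finset.mem_univ _))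
    have h2 : ((P.part (⟨0, hk⟩ : Fin k)).min' hne : ℕ) ≤ 0 := h1
    omega
  have := (label_eq_iff P hm ⟨0, hm0⟩ ⟨0, hk⟩).2 hmin0
  simpa using this

lemma parts_eq_image :
    P.parts = (Finset.univ : Finset (Fin m)).image
      (fun t : Fin m => Finset.univ.filter fun j => label P hm j = (t : ℕ) + 1) := by
  have hfib : ∀ t : Fin m, ∃ p ∈ P.parts,
      Finset.univ.filter (fun j => label P hm j = (t : ℕ) + 1) = p := by
    intro t
    obtain ⟨p, hp, hmin⟩ := exists_part_pmin P hm t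
    refine ⟨p, hp, ?_⟩
    ext j
    simp only [Finset.mem_filter, Finset.mem_univ, true_and]
    exact label_mem_part_iff P hm t j hp hmin
  have hsub : (Finset.univ : Finset (Fin m)).image
      (fun t : Fin m => Finset.univ.filter fun j => label P hm j = (t : ℕ) + 1) ⊆ P.parts := by
    intro q hq
    rw [Finset.mem_image] at hq
    obtain ⟨t, _, rfl⟩ := hq
    obtain ⟨p, hp, hfe⟩ := hfib t
    rw [hfe]; exact hp
  refine (Finset.eq_of_subset_of_card_le hsub ?_).symm
  rw [hm]
  rw [Finset.card_image_of_injOn]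
  · simp
  · intro t _ t' _ h
    obtain ⟨p, hp, hmin⟩ := exists_part_pmin P hm t
    have hjt : (⟨pmin P hm t, pmin_lt P hm t⟩ : Fin k) ∈
        Finset.univ.filter fun j => label P hm j = (t : ℕ) + 1 := by
      simp only [Finset.mem_filter, Finset.mem_univ, true_and]
      exact (label_mem_part_iff P hm t _ hp hmin).2 (mem_part_pmin P hm t hp hmin)
    have hjt' : (⟨pmin P hm t, pmin_lt P hm t⟩ : Fin k) ∈
        Finset.univ.filter fun j => label P hm j = (t' : ℕ) + 1 := by
      rw [show (Finset.univ.filter fun j => label P hm j = (t' : ℕ) + 1) =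
          (Finset.univ.filter fun j => label P hm j = (t : ℕ) + 1) from h.symm]
      exact hjt
    simp only [Finset.mem_filter, Finset.mem_univ, true_and] at hjt hjt'
    have : (t : ℕ) = (t' : ℕ) := by omega
    exact Fin.ext this

omit hm in
lemma k_eq_zero (h0 : P.parts.card = 0) : k = 0 := by
  have hP : P.parts = ∅ := Finset.card_eq_zero.1 h0
  have h2 := P.sup_parts
  rw [hP, Finset.sup_empty] at h2
  by_contra hk
  have : (⟨0, Nat.pos_of_ne_zero hk⟩ : Fin k) ∈ (Finset.univ : Finset (Fin k)) :=
    Finset.mem_univ _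
  rw [← h2] at this
  simp at this

end Core

lemma label_determines {m k : ℕ} (P P' : Finpartition (Finset.univ : Finset (Fin k)))
    (hm : P.parts.card = m) (hm' : P'.parts.card = m)
    (h : label P hm = label P' hm') : P = P' := by
  apply Finpartition.ext
  rw [parts_eq_image P hm, parts_eq_image P' hm', h]

lemma mem_props {σ m k : ℕ} (P : Finpartition (Finset.univ : Finset (Fin k)))
    (hm : P.parts.card = m) (hσ : ∀ p ∈ P.parts, p.card ≤ σ + 1) :
    (∀ x ∈ List.ofFn (label P hm) ++ [m + 1], 1 ≤ x ∧ x ≤ m + 1) ∧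
    (List.ofFn (label P hm) ++ [m + 1]).head? = some 1 ∧
    (List.ofFn (label P hm) ++ [m + 1]).getLast? = some (m + 1) ∧
    (List.ofFn (label P hm) ++ [m + 1]).count (m + 1) = 1 ∧
    (∀ i, 1 ≤ i → i ≤ m →
      1 ≤ (List.ofFn (label P hm) ++ [m + 1]).count i ∧
      (List.ofFn (label P hm) ++ [m + 1]).count i ≤ σ + 1) ∧
    (∀ i, 2 ≤ i → i ≤ m + 1 →
      (List.ofFn (label P hm) ++ [m + 1]).idxOf (i - 1) <
      (List.ofFn (label P hm) ++ [m + 1]).idxOf i) := by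
  set L := List.ofFn (label P hm) with hL
  have hnotm1 : (m + 1) ∉ L := by
    intro hmem
    have := count_label_zero P hm (v := m + 1) (Or.inr le_rfl)
    rw [List.count_eq_zero] at this
    exact this hmem
  have hkey : ∀ i (h1 : 1 ≤ i) (h2 : i ≤ m), ∃ p ∈ P.parts,
      L.count i = p.card ∧ L.idxOf i = pmin P hm ⟨i - 1, by omega⟩ := by
    intro i h1 h2
    obtain ⟨p, hp, hmin⟩ := exists_part_pmin P hm ⟨i - 1, by omega⟩
    have hc := count_label P hm ⟨i - 1, by omega⟩ hp hmin
    have hi := indexOf_label P hm ⟨i - 1, by omega⟩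
    rw [show ((⟨i - 1, by omega⟩ : Fin m) : ℕ) + 1 = i by simp; omega] at hc hi
    exact ⟨p, hp, hc, hi⟩
  have hmemL : ∀ i, 1 ≤ i → i ≤ m → i ∈ L := by
    intro i h1 h2
    obtain ⟨p, hp, hc, _⟩ := hkey i h1 h2
    by_contra hmem
    rw [List.count_eq_zero.2 hmem] at hc
    have := (P.nonempty_of_mem_parts hp).card_pos
    omega
  refine ⟨?_, ?_, ?_, ?_, ?_, ?_⟩
  · intro x hx
    rcases List.mem_append.1 hx with hx | hx
    · rw [hL, List.mem_ofFn] at hx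
      obtain ⟨j, rfl⟩ := hx
      exact ⟨one_le_label P hm j, (label_le P hm j).trans (Nat.le_succ m)⟩
    · simp only [List.mem_singleton] at hx
      omega
  · rcases Nat.eq_zero_or_pos k with hk | hk
    · subst hk
      have hm0 : m = 0 := by
        rw [← hm, Finset.card_eq_zero, Finpartition.parts_eq_empty_iff]
        exact Finset.univ_eq_empty
      subst hm0
      simp [hL]
    · have hm0 : 0 < m := by
        rcases Nat.eq_zero_or_pos m with hm0 | hm0
        · exact absurd (k_eq_zero P (hm.trans hm0)) (by omega)
        · exact hm0
      obtain ⟨k', rfl⟩ : ∃ k', k = k' + 1 := ⟨k - 1, by omega⟩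
      have : L = label P hm ⟨0, hk⟩ :: List.ofFn (fun i : Fin k' => label P hm i.succ) := by
        rw [hL, List.ofFn_succ]
        rfl
      rw [this, label_zero P hm hk hm0]
      rfl
  · exact List.getLast?_concat
  · rw [List.count_append, count_label_zero P hm (Or.inr le_rfl)]
    simp
  · intro i h1 h2
    obtain ⟨p, hp, hc, _⟩ := hkey i h1 h2
    rw [List.count_append, show ([m + 1] : List ℕ).count i = 0 by
      simp [List.count_singleton']; omega, Nat.add_zero, hc]
    exact ⟨(P.nonempty_of_mem_parts hp).card_pos, hσ p hp⟩
  · intro i h1 h2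
    by_cases hi : i = m + 1
    · subst hi
      have hm0 : 1 ≤ m := by omega
      obtain ⟨p, hp, hc, hidx⟩ := hkey m hm0 le_rfl
      rw [show m + 1 - 1 = m by omega, List.idxOf_append_of_mem (hmemL m hm0 le_rfl),
        List.idxOf_append_of_notMem hnotm1, List.idxOf_cons_self, hidx]
      have := pmin_lt P hm ⟨m - 1, by omega⟩
      simp only [hL, List.length_ofFn]
      omega
    · have h2' : i ≤ m := by omega
      obtain ⟨p, hp, hc, hidx⟩ := hkey i (by omega) h2'
      obtain ⟨p', hp', hc', hidx'⟩ := hkey (i - 1) (by omega) (by omega)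
      rw [List.idxOf_append_of_mem (hmemL (i - 1) (by omega) (by omega)),
        List.idxOf_append_of_mem (hmemL i (by omega) h2'), hidx, hidx']
      exact pmin_strictMono P hm (by simp [Fin.mk_lt_mk]; omega)

lemma surj_aux (σ m : ℕ) (l : List ℕ)
    (h1 : ∀ x ∈ l, 1 ≤ x ∧ x ≤ m + 1)
    (h3 : l.getLast? = some (m + 1))
    (h4 : l.count (m + 1) = 1)
    (h5 : ∀ i, 1 ≤ i → i ≤ m → 1 ≤ l.count i ∧ l.count i ≤ σ + 1)
    (h6 : ∀ i, 2 ≤ i → i ≤ m + 1 → l.idxOf (i - 1) < l.idxOf i) :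
    ∃ (k : ℕ) (_ : k ∈ Finset.Icc m ((σ + 1) * m))
      (P : Finpartition (Finset.univ : Finset (Fin k)))
      (hm : P.parts.card = m) (_ : ∀ p ∈ P.parts, p.card ≤ σ + 1),
      List.ofFn (label P hm) ++ [m + 1] = l := by
  classical
  have hne : l ≠ [] := by rintro rfl; simp at h3
  obtain ⟨hne', hlast⟩ : ∃ h : l ≠ [], m + 1 = l.getLast h :=
    List.mem_getLast?_eq_getLast (Option.mem_def.2 h3)
  have hl : l.dropLast ++ [m + 1] = l := by
    rw [hlast]; exact List.dropLast_append_getLast hne'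
  set l' := l.dropLast with hl'def
  set k := l'.length with hkdef
  have hcountapp : ∀ i, l.count i = l'.count i + List.count i [m + 1] := by
    intro i
    conv_lhs => rw [← hl]
    rw [List.count_append]
  have hm1 : (m + 1) ∉ l' := by
    have h := hcountapp (m + 1)
    rw [h4] at h
    simp at h
    exact List.count_eq_zero.1 (by omega)
  have hentry : ∀ x ∈ l', 1 ≤ x ∧ x ≤ m := by
    intro x hx
    have hxl : x ∈ l := by rw [← hl]; exact List.mem_append_left _ hx
    have hb := h1 x hxl
    have hxne : x ≠ m + 1 := fun h => hm1 (h ▸ hx)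
    omega
  have hcnt : ∀ i, 1 ≤ i → i ≤ m → 1 ≤ l'.count i ∧ l'.count i ≤ σ + 1 := by
    intro i hi1 him
    have h := h5 i hi1 him
    rw [hcountapp i] at h
    have hz : List.count i [m + 1] = 0 := by
      simp only [List.count_singleton']
      rw [if_neg (by omega)]
    omega
  have hmem' : ∀ i, 1 ≤ i → i ≤ m → i ∈ l' := by
    intro i hi1 him
    by_contra hmem
    have h := (hcnt i hi1 him).1
    rw [List.count_eq_zero.2 hmem] at h
    omega
  set g : Fin k → ℕ := fun j => l'.get j with hgdef
  have hgl' : List.ofFn g = l' := List.ofFn_get l'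
  have hgmem : ∀ j, 1 ≤ g j ∧ g j ≤ m := fun j =>
    hentry _ (List.mem_iff_get.2 ⟨j, rfl⟩)
  let s : Setoid (Fin k) := ⟨fun a b => g a = g b, ⟨fun _ => rfl, Eq.symm, Eq.trans⟩⟩
  letI : DecidableRel s.r := fun a b => Nat.decEq _ _
  set P := Finpartition.ofSetoid s with hPdef
  have hpart : ∀ j : Fin k, P.part j = Finset.univ.filter fun b => g b = g j := by
    intro j
    ext b
    rw [hPdef, Finpartition.mem_part_ofSetoid_iff_rel]
    simp only [Finset.mem_filter, Finset.mem_univ, true_and]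
    exact ⟨Eq.symm, Eq.symm⟩
  have hvmem : ∀ i, 1 ≤ i → i ≤ m → ∃ j : Fin k, g j = i := by
    intro i hi1 him
    obtain ⟨j, hj⟩ := List.mem_iff_get.1 (hmem' i hi1 him)
    exact ⟨j, hj⟩
  have hparts : P.parts
      = (Finset.Icc 1 m).image (fun i => Finset.univ.filter fun j : Fin k => g j = i) := by
    apply Finset.Subset.antisymm
    · intro p hp
      obtain ⟨j, hj⟩ := P.nonempty_of_mem_parts hp
      have hpj : P.part j = p := P.part_eq_of_mem hp hj
      rw [Finset.mem_image]
      refine ⟨g j, ?_, ?_⟩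
      · rw [Finset.mem_Icc]
        exact ⟨(hgmem j).1, (hgmem j).2⟩
      · rw [← hpj, hpart]
    · intro p hp
      rw [Finset.mem_image] at hp
      obtain ⟨i, hi, rfl⟩ := hp
      rw [Finset.mem_Icc] at hi
      obtain ⟨j, hj⟩ := hvmem i hi.1 hi.2
      subst hj
      rw [← hpart j]
      exact P.part_mem.2 (Finset.mem_univ j)
  have hinj : Set.InjOn (fun i => Finset.univ.filter fun j : Fin k => g j = i)
      ((Finset.Icc 1 m) : Set ℕ) := by
    intro i hi i' hi' h
    simp only at h
    rw [Finset.mem_coe, Finset.mem_Icc] at hi hi'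
    obtain ⟨j, hj⟩ := hvmem i hi.1 hi.2
    have hji : j ∈ Finset.univ.filter fun j : Fin k => g j = i := by simp [hj]
    have hji' : j ∈ Finset.univ.filter fun j : Fin k => g j = i' := by rw [← h]; exact hji
    simp only [Finset.mem_filter, Finset.mem_univ, true_and] at hji'
    omega
  have hcard : P.parts.card = m := by
    rw [hparts, Finset.card_image_of_injOn hinj, Nat.card_Icc]
    omega
  have hcountcard : ∀ i, l'.count i = (Finset.univ.filter fun j : Fin k => g j = i).card := by
    intro i
    conv_lhs => rw [← hgl']
    exact count_ofFn g i
  have hsize : ∀ p ∈ P.parts, p.card ≤ σ + 1 := by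
    intro p hp
    rw [hparts, Finset.mem_image] at hp
    obtain ⟨i, hi, rfl⟩ := hp
    rw [Finset.mem_Icc] at hi
    rw [← hcountcard]
    exact (hcnt i hi.1 hi.2).2
  have hsum : ∑ p ∈ P.parts, p.card = k := by
    rw [P.sum_card_parts, Finset.card_univ, Fintype.card_fin]
  have hk : k ∈ Finset.Icc m ((σ + 1) * m) := by
    rw [Finset.mem_Icc]
    constructor
    · have h := Finset.card_nsmul_le_sum P.parts (fun p => p.card) 1
        (fun p hp => (P.nonempty_of_mem_parts hp).card_pos)
      rw [hsum, hcard, smul_eq_mul, mul_one] at h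
      exact h
    · have h := Finset.sum_le_card_nsmul P.parts (fun p => p.card) (σ + 1)
        (fun p hp => hsize p hp)
      rw [hsum, hcard, smul_eq_mul, Nat.mul_comm] at h
      exact h
  have hidx : ∀ i, 1 ≤ i → i ≤ m →
      minOf (Finset.univ.filter fun j : Fin k => g j = i) = l'.idxOf i := by
    intro i hi1 him
    obtain ⟨j, hj⟩ := hvmem i hi1 him
    have hnb : (Finset.univ.filter fun j : Fin k => g j = i).Nonempty := ⟨j, by simp [hj]⟩
    rw [minOf, dif_pos hnb]
    have hmem : i ∈ l' := hmem' i hi1 him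
    have hlt : l'.idxOf i < l'.length := List.idxOf_lt_length_iff.2 hmem
    have hmm := Finset.min'_mem _ hnb
    simp only [Finset.mem_filter, Finset.mem_univ, true_and] at hmm
    apply le_antisymm
    · have hh : (⟨l'.idxOf i, hlt⟩ : Fin k) ∈
          Finset.univ.filter fun j : Fin k => g j = i := by
        simp only [Finset.mem_filter, Finset.mem_univ, true_and]
        exact List.idxOf_get hlt
      exact Finset.min'_le _ _ hh
    · exact indexOf_le (((Finset.univ.filter fun j : Fin k => g j = i).min' hnb).isLt) hmm
  have hidxl : ∀ i, 1 ≤ i → i ≤ m → l.idxOf i = l'.idxOf i := by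
    intro i hi1 him
    conv_lhs => rw [← hl]
    exact List.idxOf_append_of_mem (hmem' i hi1 him)
  have hchain : ∀ i, 1 ≤ i → i < m → l'.idxOf i < l'.idxOf (i + 1) := by
    intro i hi1 him
    have h := h6 (i + 1) (by omega) (by omega)
    rw [show i + 1 - 1 = i by omega, hidxl i hi1 (by omega),
      hidxl (i + 1) (by omega) (by omega)] at h
    exact h
  have hmono : ∀ d a, 1 ≤ a → a + d + 1 ≤ m → l'.idxOf a < l'.idxOf (a + d + 1) := by
    intro d
    induction d with
    | zero => intro a ha1 ha2; simpa using hchain a ha1 (by omega)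
    | succ d ih =>
      intro a ha1 ha2
      have hlt1 := ih a ha1 (by omega)
      have hlt2 := hchain (a + d + 1) (by omega) (by omega)
      rw [show a + (d + 1) + 1 = a + d + 1 + 1 by omega]
      omega
  set f : Fin m → ℕ := fun t => l'.idxOf ((t : ℕ) + 1) with hfdef
  have hf : StrictMono f := by
    intro t t' hlt
    have h' : (t : ℕ) < (t' : ℕ) := hlt
    have h := hmono ((t' : ℕ) - (t : ℕ) - 1) ((t : ℕ) + 1) (by omega)
      (by have := t'.isLt; omega)
    rw [show (t : ℕ) + 1 + ((t' : ℕ) - (t : ℕ) - 1) + 1 = (t' : ℕ) + 1 by omega] at h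
    exact h
  have hfS : ∀ t, f t ∈ P.parts.image minOf := by
    intro t
    rw [Finset.mem_image]
    refine ⟨Finset.univ.filter fun j : Fin k => g j = (t : ℕ) + 1, ?_, ?_⟩
    · rw [hparts]
      exact Finset.mem_image_of_mem _
        (Finset.mem_Icc.2 ⟨by omega, by have := t.isLt; omega⟩)
    · exact hidx ((t : ℕ) + 1) (by omega) (by have := t.isLt; omega)
  have hfeq : f = pmin P hcard :=
    Finset.orderEmbOfFin_unique (card_mins P hcard) hfS hf
  have hlab : label P hcard = g := by
    funext j
    have hb := hgmem j
    have hminf : minOf (P.part j) = pmin P hcard ⟨g j - 1, by omega⟩ := by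
      rw [hpart j, ← hfeq, hidx (g j) hb.1 hb.2, hfdef]
      show l'.idxOf (g j) = l'.idxOf (g j - 1 + 1)
      congr 1
      omega
    have hlj := (label_eq_iff P hcard ⟨g j - 1, by omega⟩ j).2 hminf
    rw [hlj]
    show g j - 1 + 1 = g j
    omega
  refine ⟨k, hk, P, hcard, hsize, ?_⟩
  rw [hlab, hgl', hl]

end GiftAux

open GiftAux

theorem stmt_18 (σ n : ℕ) (hn : 1 ≤ n) :
    Nat.card {l : List ℕ //
        (∀ x ∈ l, 1 ≤ x ∧ x ≤ n) ∧
        l.head? = some 1 ∧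
        l.getLast? = some n ∧
        l.count n = 1 ∧
        (∀ i, 1 ≤ i → i ≤ n - 1 → 1 ≤ l.count i ∧ l.count i ≤ σ + 1) ∧
        (∀ i, 2 ≤ i → i ≤ n → l.idxOf (i - 1) < l.idxOf i)} =
      ∑ k ∈ Finset.Icc (n - 1) ((σ + 1) * (n - 1)), E σ (n - 1) k := by
  classical
  obtain ⟨m, rfl⟩ : ∃ m, n = m + 1 := ⟨n - 1, by omega⟩
  haveI : ∀ k : ℕ, Fintype {P : Finpartition (Finset.univ : Finset (Fin k)) //
      P.parts.card = m ∧ ∀ p ∈ P.parts, p.card ≤ σ + 1} := fun k => Fintype.ofFinite _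
  set Φ : (Σ k : (Finset.Icc m ((σ + 1) * m) : Finset ℕ),
      {P : Finpartition (Finset.univ : Finset (Fin (k : ℕ))) //
        P.parts.card = m ∧ ∀ p ∈ P.parts, p.card ≤ σ + 1}) →
      {l : List ℕ //
        (∀ x ∈ l, 1 ≤ x ∧ x ≤ m + 1) ∧
        l.head? = some 1 ∧
        l.getLast? = some (m + 1) ∧
        l.count (m + 1) = 1 ∧
        (∀ i, 1 ≤ i → i ≤ m + 1 - 1 → 1 ≤ l.count i ∧ l.count i ≤ σ + 1) ∧
        (∀ i, 2 ≤ i → i ≤ m + 1 → l.idxOf (i - 1) < l.idxOf i)} :=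
    fun x => ⟨List.ofFn (GiftAux.label x.2.1 x.2.2.1) ++ [m + 1],
      GiftAux.mem_props x.2.1 x.2.2.1 x.2.2.2⟩ with hΦ
  have hbij : Function.Bijective Φ := by
    constructor
    · rintro ⟨⟨k1, hk1⟩, P1, hP1⟩ ⟨⟨k2, hk2⟩, P2, hP2⟩ h
      have hlist : List.ofFn (GiftAux.label P1 hP1.1) ++ [m + 1]
          = List.ofFn (GiftAux.label P2 hP2.1) ++ [m + 1] := congrArg Subtype.val h
      have hlen : k1 = k2 := by
        have hh := congrArg List.length hlist
        simpa using hh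
      subst hlen
      have hof : List.ofFn (GiftAux.label P1 hP1.1) = List.ofFn (GiftAux.label P2 hP2.1) := by
        have hh := congrArg List.dropLast hlist
        rwa [List.dropLast_concat, List.dropLast_concat] at hh
      have hfun := List.ofFn_inj.1 hof
      have hP : P1 = P2 := GiftAux.label_determines P1 P2 hP1.1 hP2.1 hfun
      subst hP
      rfl
    · rintro ⟨l, hl1, hl2, hl3, hl4, hl5, hl6⟩
      obtain ⟨k, hk, P, hmP, hσP, heq⟩ :=
        GiftAux.surj_aux σ m l hl1 hl3 hl4 (fun i a b => hl5 i a b) hl6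
      exact ⟨⟨⟨k, hk⟩, P, hmP, hσP⟩, Subtype.ext heq⟩
  rw [Nat.card_congr (Equiv.ofBijective Φ hbij).symm, Nat.card_eq_fintype_card,
    Fintype.card_sigma, show m + 1 - 1 = m from rfl,
    ← Finset.sum_coe_sort (Finset.Icc m ((σ + 1) * m)) (fun k => E σ m k)]
  exact Finset.sum_congr rfl fun x _ => Fintype.card_eq_nat_card
end
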